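/- arXiv:1901.06480 — 5 statements merged into one kernel-verified Lean document; each statement's English description precedes it below -/
import Mathlib

section
/- A finite group G is d-uniformly generated if and only if d equals the length ℓ(G) of G (the maximal length of an unrefinable chain of subgroups from 1 to G). -/
/-- A chain `⊥ = c 0 < c 1 < ⋯ < c n = ⊤` of subgroups is *unrefinable* if each
`c i` is maximal in `c (i+1)` (i.e. consecutive terms form a covering pair). -/
def IsUnrefinableChain {G : Type*} [Group G] {n : ℕ} (c : Fin (n + 1) → Subgroup G) : Prop :=
  c 0 = ⊥ ∧ c (Fin.last n) = ⊤ ∧ ∀ i : Fin n, c i.castSucc ⋖ c i.succ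

/-- The length `ℓ(G)`: the maximal length of an unrefinable chain of subgroups. -/
noncomputable def groupLength (G : Type*) [Group G] : ℕ :=
  sSup {n | ∃ c : Fin (n + 1) → Subgroup G, IsUnrefinableChain c}

/-- The depth `λ(G)`: the minimal length of an unrefinable chain of subgroups. -/
noncomputable def groupDepth (G : Type*) [Group G] : ℕ :=
  sInf {n | ∃ c : Fin (n + 1) → Subgroup G, IsUnrefinableChain c}

/-- `d(G)`: the minimal number of generators of `G`. -/
noncomputable def minGen (G : Type*) [Group G] : ℕ :=
  sInf {n | ∃ S : Finset G, S.card = n ∧ Subgroup.closure (S : Set G) = ⊤}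

/-- `m(G)`: the maximal size of an independent generating set of `G`. -/
noncomputable def maxIndep (G : Type*) [Group G] : ℕ :=
  sSup {n | ∃ S : Finset G, S.card = n ∧ Subgroup.closure (S : Set G) = ⊤ ∧
    ∀ a ∈ S, Subgroup.closure ((S : Set G) \ {a}) < ⊤}

/-- Given a tuple `x : Fin d → G`, the chain of subgroups
`⟨⟩ ≤ ⟨x 0⟩ ≤ ⟨x 0, x 1⟩ ≤ ⋯ ≤ ⟨x 0, …, x (d-1)⟩`. -/
def partialClosure {G : Type*} [Group G] {d : ℕ} (x : Fin d → G) (i : Fin (d + 1)) :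
    Subgroup G :=
  Subgroup.closure (x '' {j | (j : ℕ) < (i : ℕ)})

/-- `G` is *`d`-uniformly generated* if strictly ascending chains
`1 < ⟨x 1⟩ < ⋯ < ⟨x 1, …, x d⟩` exist, and every such chain ends at `G`. -/
def DUnifGen (G : Type*) [Group G] (d : ℕ) : Prop :=
  (∃ x : Fin d → G, StrictMono (partialClosure x)) ∧
  ∀ x : Fin d → G, StrictMono (partialClosure x) → Subgroup.closure (Set.range x) = ⊤

/-- `G` is *uniformly generated* if it is `d(G)`-uniformly generated. -/
def UniformlyGenerated (G : Type*) [Group G] : Prop :=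
  DUnifGen G (minGen G)

/-- `G` is elementary abelian: isomorphic to `(C_p)^k` for some prime `p`. -/
def IsElementaryAbelian (G : Type*) [Group G] : Prop :=
  ∃ (p k : ℕ), p.Prime ∧ Nonempty (G ≃* (Fin k → Multiplicative (ZMod p)))

/-- `G` is supersolvable: it has a normal series (all terms normal in `G`)
with cyclic factors (each step is obtained by adjoining a single element). -/
def IsSupersolvableGroup (G : Type*) [Group G] : Prop :=
  ∃ (n : ℕ) (c : Fin (n + 1) → Subgroup G),
    c 0 = ⊥ ∧ c (Fin.last n) = ⊤ ∧ Monotone c ∧ (∀ i, (c i).Normal) ∧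
    ∀ i : Fin n, ∃ g : G, c i.succ = c i.castSucc ⊔ Subgroup.zpowers g

/-- `G` is isomorphic to `(C_p)^{k} ⋊ C_q` where `C_q` acts by a nontrivial scalar:
expressed internally via a normal elementary abelian `p`-subgroup `N`, an element `g`
of order `q` complementing it, whose conjugation action raises every element of `N`
to a fixed power `c` which is a nontrivial scalar of multiplicative order `q` mod `p`. -/
def IsScalarExtension (G : Type*) [Group G] : Prop :=
  ∃ (p q : ℕ), p.Prime ∧ q.Prime ∧
    ∃ (N : Subgroup G) (g : G) (c : ℕ),
      N.Normal ∧ (∀ a ∈ N, ∀ b ∈ N, a * b = b * a) ∧ (∀ a ∈ N, a ^ p = 1) ∧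
      orderOf g = q ∧
      N ⊔ Subgroup.zpowers g = ⊤ ∧ N ⊓ Subgroup.zpowers g = ⊥ ∧
      (∀ n ∈ N, g * n * g⁻¹ = n ^ c) ∧
      c % p ≠ 1 % p ∧ c ^ q % p = 1 % p


section Aux

variable {G : Type*} [Group G] [Finite G]

private abbrev Cov (G : Type*) [Group G] : SetRel (Subgroup G) (Subgroup G) := {p | p.1 ⋖ p.2}

private lemma aux_exists_cover {a b : Subgroup G} (h : a < b) : ∃ M, a ⋖ M ∧ M ≤ b := by
  obtain ⟨M, hM, hmin⟩ := (wellFounded_lt (α := Subgroup G)).has_min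
    {X | a < X ∧ X ≤ b} ⟨b, h, le_rfl⟩
  exact ⟨M, ⟨hM.1, fun Y hY hYM => hmin Y ⟨hY, hYM.le.trans hM.2⟩ hYM⟩, hM.2⟩

private lemma aux_refine (b : Subgroup G) (a : Subgroup G) (hab : a ≤ b) :
    ∃ s : RelSeries (Cov G), s.head = a ∧ s.last = b ∧ (a < b → 1 ≤ s.length) := by
  revert hab
  refine (wellFounded_gt (α := Subgroup G)).induction
    (C := fun a => a ≤ b → ∃ s : RelSeries (Cov G),
      s.head = a ∧ s.last = b ∧ (a < b → 1 ≤ s.length)) a ?_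
  intro a ih hab
  rcases eq_or_lt_of_le hab with rfl | hlt
  · exact ⟨RelSeries.singleton _ a, RelSeries.head_singleton a, RelSeries.last_singleton a,
      fun h => absurd h (lt_irrefl a)⟩
  · obtain ⟨M, hc, hMb⟩ := aux_exists_cover hlt
    obtain ⟨s, hh, hl, _⟩ := ih M hc.lt hMb
    have hrel : (a, s.head) ∈ Cov G := by rw [hh]; exact hc
    refine ⟨s.cons a hrel, RelSeries.head_cons s a hrel, ?_, fun _ => ?_⟩
    · rw [RelSeries.last_cons]; exact hl
    · show 1 ≤ 0 + s.length + 1; omega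

private lemma aux_chain_to_series : ∀ {m : ℕ} (c : Fin (m + 1) → Subgroup G),
    StrictMono c → ∃ s : RelSeries (Cov G),
      s.head = c 0 ∧ s.last = c (Fin.last m) ∧ m ≤ s.length := by
  intro m
  induction m with
  | zero =>
    intro c _
    exact ⟨RelSeries.singleton _ (c 0), RelSeries.head_singleton _,
      RelSeries.last_singleton _, Nat.zero_le _⟩
  | succ m ih =>
    intro c hc
    obtain ⟨s, hh, hl, hlen⟩ := ih (c ∘ Fin.castSucc)
      (fun i j hij => hc (by exact_mod_cast hij))
    have hgap : c ((Fin.last m).castSucc) ≤ c (Fin.last (m + 1)) :=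
      (hc (Fin.castSucc_lt_last _)).le
    obtain ⟨t, th, tl, tlen⟩ := aux_refine (c (Fin.last (m + 1))) (c ((Fin.last m).castSucc)) hgap
    have hconn : s.last = t.head := by rw [hl, th]; rfl
    refine ⟨s.smash t hconn, ?_, ?_, ?_⟩
    · rw [RelSeries.head_smash]; exact hh
    · rw [RelSeries.last_smash]; exact tl
    · have h1 : 1 ≤ t.length := tlen (hc (Fin.castSucc_lt_last _))
      show m + 1 ≤ s.length + t.length; omega

private lemma aux_bdd :
    BddAbove {n | ∃ c : Fin (n + 1) → Subgroup G, IsUnrefinableChain c} := by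
  refine ⟨Nat.card (Subgroup G), fun n hn => ?_⟩
  obtain ⟨c, hc⟩ := hn
  have hsm : StrictMono c := Fin.strictMono_iff_lt_succ.mpr fun i => (hc.2.2 i).lt
  have := Nat.card_le_card_of_injective c hsm.injective
  simpa using (Nat.lt_of_succ_le (by simpa using this)).le

private lemma aux_chain_le {m : ℕ} (c : Fin (m + 1) → Subgroup G)
    (hsm : StrictMono c) (h0 : c 0 = ⊥) :
    m ≤ groupLength G ∧ (c (Fin.last m) ≠ ⊤ → m + 1 ≤ groupLength G) := by
  obtain ⟨s, hh, hl, hlen⟩ := aux_chain_to_series c hsm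
  obtain ⟨t, th, tl, tlen⟩ := aux_refine ⊤ (c (Fin.last m)) le_top
  have hconn : s.last = t.head := by rw [hl, th]
  set u := s.smash t hconn with hu
  have hmem : u.length ∈ {n | ∃ c : Fin (n + 1) → Subgroup G, IsUnrefinableChain c} := by
    refine ⟨u.toFun, ?_, ?_, u.step⟩
    · show u.head = ⊥; rw [hu, RelSeries.head_smash, hh, h0]
    · show u.last = ⊤; rw [hu, RelSeries.last_smash, tl]
  have hle : u.length ≤ groupLength G := le_csSup aux_bdd hmem
  have hulen : u.length = s.length + t.length := rfl
  constructor
  · omega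
  · intro hne
    have : 1 ≤ t.length := tlen (lt_top_iff_ne_top.mpr hne)
    omega

private lemma aux_pc_zero {d : ℕ} (x : Fin d → G) : partialClosure x 0 = ⊥ := by
  have h : {j : Fin d | (j : ℕ) < ((0 : Fin (d + 1)) : ℕ)} = ∅ := by
    ext j; simp
  rw [partialClosure, h, Set.image_empty, Subgroup.closure_empty]

private lemma aux_pc_last {d : ℕ} (x : Fin d → G) :
    Subgroup.closure (Set.range x) = partialClosure x (Fin.last d) := by
  rw [partialClosure]
  congr 1
  rw [← Set.image_univ]
  congr 1
  ext j
  simp [Fin.is_lt]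

private lemma aux_exists_gen {n : ℕ} (c : Fin (n + 1) → Subgroup G)
    (h : IsUnrefinableChain c) :
    ∃ x : Fin n → G, ∀ i : Fin (n + 1), partialClosure x i = c i := by
  have hex : ∀ i : Fin n, ∃ g, g ∈ c i.succ ∧ g ∉ c i.castSucc := by
    intro i
    obtain ⟨g, hg1, hg2⟩ := SetLike.exists_of_lt (h.2.2 i).lt
    exact ⟨g, hg1, hg2⟩
  choose x hx1 hx2 using hex
  refine ⟨x, ?_⟩
  intro i
  induction i using Fin.induction with
  | zero => rw [aux_pc_zero, h.1]
  | succ i ih =>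
    have ih' : Subgroup.closure (x '' {j : Fin n | (j : ℕ) < ((i.castSucc : Fin (n + 1)) : ℕ)})
        = c i.castSucc := ih
    have hset : {j : Fin n | (j : ℕ) < ((i.succ : Fin (n + 1)) : ℕ)} =
        {j : Fin n | (j : ℕ) < ((i.castSucc : Fin (n + 1)) : ℕ)} ∪ {i} := by
      ext j
      simp only [Set.mem_setOf_eq, Fin.val_succ, Fin.coe_castSucc, Set.mem_union,
        Set.mem_singleton_iff, Fin.ext_iff]
      omega
    have hP : partialClosure x i.succ =
        Subgroup.closure (x '' {j : Fin n | (j : ℕ) < ((i.castSucc : Fin (n + 1)) : ℕ)}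
          ∪ {x i}) := by
      rw [partialClosure, hset, Set.image_union, Set.image_singleton]
    have hle : partialClosure x i.succ ≤ c i.succ := by
      rw [hP]
      refine (Subgroup.closure_le _).mpr (Set.union_subset ?_ ?_)
      · intro g hg
        have : g ∈ c i.castSucc := ih' ▸ Subgroup.subset_closure hg
        exact (h.2.2 i).lt.le this
      · intro g hg
        rw [Set.mem_singleton_iff] at hg
        exact hg ▸ hx1 i
    have hge : c i.castSucc ≤ partialClosure x i.succ := by
      rw [hP, ← ih']
      exact Subgroup.closure_mono Set.subset_union_left
    have hxin : x i ∈ partialClosure x i.succ := by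
      rw [hP]
      exact Subgroup.subset_closure (Set.mem_union_right _ rfl)
    rcases (h.2.2 i).wcovBy.eq_or_eq hge hle with heq | heq
    · exact absurd (heq ▸ hxin) (hx2 i)
    · exact heq

end Aux


/-- A finite group `G` is `d`-uniformly generated iff `d = ℓ(G)`. -/
theorem dUnifGen_iff_eq_groupLength (G : Type*) [Group G] [Finite G] (d : ℕ) :
    DUnifGen G d ↔ d = groupLength G := by
  have hne : {n | ∃ c : Fin (n + 1) → Subgroup G, IsUnrefinableChain c}.Nonempty := by
    obtain ⟨s, hh, hl, _⟩ := aux_refine (⊤ : Subgroup G) ⊥ bot_le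
    exact ⟨s.length, s.toFun, hh, hl, s.step⟩
  have hmem : groupLength G ∈ {n | ∃ c : Fin (n + 1) → Subgroup G, IsUnrefinableChain c} :=
    Nat.sSup_mem hne aux_bdd
  obtain ⟨c, hc⟩ := hmem
  obtain ⟨x, hx⟩ := aux_exists_gen c hc
  have hcsm : StrictMono c := Fin.strictMono_iff_lt_succ.mpr fun i => (hc.2.2 i).lt
  have hxsm : StrictMono (partialClosure x) := fun i j hij => by
    rw [hx, hx]; exact hcsm hij
  constructor
  · rintro ⟨⟨y, hy⟩, huni⟩
    have hd_le : d ≤ groupLength G :=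
      (aux_chain_le (partialClosure y) hy (aux_pc_zero y)).1
    by_contra hne'
    have hdlt : d < groupLength G := lt_of_le_of_ne hd_le hne'
    have hdL1 : d + 1 ≤ groupLength G + 1 := by omega
    let z : Fin d → G := fun j => x (Fin.castLE hdlt.le j)
    have hzset : ∀ i : Fin (d + 1), z '' {j : Fin d | (j : ℕ) < (i : ℕ)} =
        x '' {j : Fin (groupLength G) | (j : ℕ) < ((Fin.castLE hdL1 i : Fin (groupLength G + 1)) : ℕ)} := by
      intro i
      ext g
      constructor
      · rintro ⟨j, hj, rfl⟩
        exact ⟨Fin.castLE hdlt.le j, by simpa using hj, rfl⟩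
      · rintro ⟨j, hj, rfl⟩
        simp only [Fin.coe_castLE, Set.mem_setOf_eq] at hj
        have hjd : (j : ℕ) < d := lt_of_lt_of_le hj (Nat.lt_succ_iff.mp i.isLt)
        refine ⟨⟨(j : ℕ), hjd⟩, hj, ?_⟩
        have hje : Fin.castLE hdlt.le ⟨(j : ℕ), hjd⟩ = j := Fin.ext rfl
        show x (Fin.castLE hdlt.le ⟨(j : ℕ), hjd⟩) = x j
        rw [hje]
      
    have hz : ∀ i : Fin (d + 1), partialClosure z i = c (Fin.castLE hdL1 i) := by
      intro i
      rw [partialClosure, hzset i, ← partialClosure, hx]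
    have hzsm : StrictMono (partialClosure z) := fun i j hij => by
      rw [hz, hz]
      refine hcsm ?_
      rw [Fin.lt_def] at hij ⊢
      simpa using hij
    have htop := huni z hzsm
    rw [aux_pc_last, hz] at htop
    have hlt : c (Fin.castLE hdL1 (Fin.last d)) < c (Fin.last (groupLength G)) := by
      refine hcsm ?_
      rw [Fin.lt_def]
      simpa using hdlt
    rw [htop, hc.2.1] at hlt
    exact lt_irrefl _ hlt
  · rintro rfl
    refine ⟨⟨x, hxsm⟩, ?_⟩
    intro y hy
    have h2 := (aux_chain_le (partialClosure y) hy (aux_pc_zero y)).2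
    by_contra hne'
    rw [aux_pc_last] at hne'
    exact absurd (h2 hne') (by omega)
end

section
/- If G is a finite uniformly generated group and N is a normal subgroup of G, then both N and G/N are uniformly generated. -/
-- ===== auxiliary lemmas =====
section AuxLemmas

open Subgroup

variable {H : Type*} [Group H]

theorem partialClosure_zero {d : ℕ} (x : Fin d → H) : partialClosure x 0 = ⊥ := by
  have h : x '' {j | (j : ℕ) < ((0 : Fin (d+1)) : ℕ)} = ∅ := by
    simp
  rw [partialClosure, h, Subgroup.closure_empty]

theorem partialClosure_succ {d : ℕ} (x : Fin d → H) (i : Fin d) :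
    partialClosure x i.succ = partialClosure x i.castSucc ⊔ Subgroup.zpowers (x i) := by
  have h : {j : Fin d | (j : ℕ) < ((i.succ : Fin (d+1)) : ℕ)}
      = {j : Fin d | (j : ℕ) < ((i.castSucc : Fin (d+1)) : ℕ)} ∪ {i} := by
    ext j
    simp only [Set.mem_setOf_eq, Set.mem_union, Set.mem_singleton_iff, Fin.val_succ,
      Fin.coe_castSucc, Nat.lt_succ_iff_lt_or_eq, Fin.ext_iff]
  rw [partialClosure, partialClosure, h, Set.image_union, Set.image_singleton,
    Subgroup.closure_union, Subgroup.zpowers_eq_closure]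

theorem partialClosure_last {d : ℕ} (x : Fin d → H) :
    partialClosure x (Fin.last d) = Subgroup.closure (Set.range x) := by
  have h : x '' {j : Fin d | (j : ℕ) < ((Fin.last d : Fin (d+1)) : ℕ)} = Set.range x := by
    rw [show {j : Fin d | (j : ℕ) < ((Fin.last d : Fin (d+1)) : ℕ)} = Set.univ from by
      ext j; simp [j.isLt]]
    exact Set.image_univ
  rw [partialClosure, h]

theorem exists_gen_of_covChain {n : ℕ} (c : Fin (n+1) → Subgroup H)
    (h0 : c 0 = ⊥) (hstep : ∀ i : Fin n, c i.castSucc ⋖ c i.succ) :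
    ∃ x : Fin n → H, ∀ i, partialClosure x i = c i := by
  have hx : ∀ i : Fin n, ∃ g : H, c i.castSucc ⊔ Subgroup.zpowers g = c i.succ := by
    intro i
    obtain ⟨g, hg1, hg2⟩ := SetLike.exists_of_lt (hstep i).lt
    refine ⟨g, ?_⟩
    have hle : c i.castSucc ⊔ Subgroup.zpowers g ≤ c i.succ :=
      sup_le (hstep i).lt.le (by rwa [Subgroup.zpowers_le])
    have hlt : c i.castSucc < c i.castSucc ⊔ Subgroup.zpowers g := by
      refine lt_of_le_of_ne le_sup_left (fun h => hg2 ?_)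
      rw [h]
      exact le_sup_right (α := Subgroup H) (Subgroup.mem_zpowers g)
    rcases lt_or_eq_of_le hle with h | h
    · exact absurd h ((hstep i).2 hlt)
    · exact h
  choose x hxs using hx
  refine ⟨x, fun i => ?_⟩
  induction i using Fin.induction with
  | zero => rw [partialClosure_zero, h0]
  | succ i ih => rw [partialClosure_succ, ih, hxs]

theorem minGen_le [Finite H] (S : Finset H) (h : Subgroup.closure (S : Set H) = ⊤) :
    minGen H ≤ S.card :=
  Nat.sInf_le ⟨S, rfl, h⟩

theorem minGen_spec (H : Type*) [Group H] [Finite H] :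
    ∃ S : Finset H, S.card = minGen H ∧ Subgroup.closure (S : Set H) = ⊤ := by
  have : Fintype H := Fintype.ofFinite H
  have hne : {n | ∃ S : Finset H, S.card = n ∧ Subgroup.closure (S : Set H) = ⊤}.Nonempty :=
    ⟨(Finset.univ : Finset H).card, Finset.univ, rfl, by rw [Finset.coe_univ, Subgroup.closure_univ]⟩
  obtain ⟨S, h1, h2⟩ := Nat.sInf_mem hne
  exact ⟨S, h1, h2⟩

theorem exists_strictMono_pc (H : Type*) [Group H] [Finite H] :
    ∃ x : Fin (minGen H) → H, StrictMono (partialClosure x) ∧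
      Subgroup.closure (Set.range x) = ⊤ := by
  classical
  obtain ⟨S, hcard, hgen⟩ := minGen_spec H
  obtain ⟨x, hinj, hrange⟩ : ∃ x : Fin (minGen H) → H,
      Function.Injective x ∧ Set.range x = (S : Set H) := by
    have e := S.equivFin
    refine ⟨fun i => (e.symm (Fin.cast hcard.symm i) : H), ?_, ?_⟩
    · intro a b hab
      have := e.symm.injective (Subtype.ext hab)
      simpa [Fin.ext_iff] using congrArg Fin.val this
    · ext g
      constructor
      · rintro ⟨i, rfl⟩; exact (e.symm _).2
      · intro hg
        refine ⟨Fin.cast hcard (e ⟨g, hg⟩), ?_⟩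
        simp
  have hclos : Subgroup.closure (Set.range x) = ⊤ := by rw [hrange]; exact hgen
  refine ⟨x, ?_, hclos⟩
  rw [Fin.strictMono_iff_lt_succ]
  intro i
  have hle : partialClosure x i.castSucc ≤ partialClosure x i.succ := by
    apply Subgroup.closure_mono
    apply Set.image_mono
    intro a ha
    simp only [Set.mem_setOf_eq, Fin.coe_castSucc, Fin.val_succ] at *
    omega
  rcases lt_or_eq_of_le hle with h | h
  · exact h
  · exfalso
    have hmem : x i ∈ partialClosure x i.castSucc := by
      rw [h]
      exact Subgroup.subset_closure ⟨i, by simp, rfl⟩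
    have hsub : x '' {j | (j : ℕ) < (i.castSucc : ℕ)} ⊆ (S : Set H) \ {x i} := by
      rintro - ⟨j, hj, rfl⟩
      refine ⟨hrange ▸ Set.mem_range_self j, ?_⟩
      simp only [Set.mem_singleton_iff]
      intro heq
      have := congrArg Fin.val (hinj heq)
      simp only [Set.mem_setOf_eq, Fin.coe_castSucc] at hj
      omega
    have hxi : x i ∈ Subgroup.closure ((S : Set H) \ {x i}) :=
      Subgroup.closure_mono hsub hmem
    have htop : Subgroup.closure ((S : Set H) \ {x i}) = ⊤ := by
      rw [eq_top_iff, ← hgen, Subgroup.closure_le]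
      intro a ha
      by_cases hax : a = x i
      · subst hax; exact hxi
      · exact Subgroup.subset_closure ⟨ha, hax⟩
    have hmemS : x i ∈ S := by
      rw [← Finset.mem_coe, ← hrange]; exact Set.mem_range_self i
    have : minGen H ≤ (S.erase (x i)).card := by
      apply minGen_le
      rw [Finset.coe_erase]
      exact htop
    rw [Finset.card_erase_of_mem hmemS, hcard] at this
    have hpos : 0 < minGen H := i.pos
    omega

end AuxLemmas

-- ===== covering series machinery =====

/-- A series of subgroups in which consecutive terms are covering pairs. -/
abbrev CovSeries (H : Type*) [Group H] := RelSeries {p : Subgroup H × Subgroup H | p.1 ⋖ p.2}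

section CovSeries

variable {H : Type*} [Group H]

theorem covSeries_head_eq_last_of_length_eq_zero (p : CovSeries H) (h : p.length = 0) :
    p.head = p.last := by
  have : (Fin.last p.length) = (0 : Fin (p.length + 1)) := by
    ext; simp [h]
  unfold RelSeries.head RelSeries.last; rw [this]

theorem card_lt_card_of_lt [Finite H] {A B : Subgroup H} (h : A < B) :
    Nat.card A < Nat.card B := by
  have hss : (A : Set H) ⊂ (B : Set H) := SetLike.lt_iff_le_and_exists.mp h |>.elim
    (fun hle ⟨g, hgB, hgA⟩ => ⟨hle, fun hBA => hgA (hBA hgB)⟩)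
  calc Nat.card A = (A : Set H).ncard := (Nat.card_coe_set_eq _)
    _ < (B : Set H).ncard := Set.ncard_lt_ncard hss (Set.toFinite _)
    _ = Nat.card B := (Nat.card_coe_set_eq _).symm

theorem exists_covSeries [Finite H] :
    ∀ (k : ℕ) (B : Subgroup H), Nat.card B ≤ k → ∀ A ≤ B,
      ∃ p : CovSeries H, p.head = A ∧ p.last = B := by
  intro k
  induction k with
  | zero =>
    intro B hB
    exact absurd (Nat.card_pos (α := B)) (by omega)
  | succ k ih =>
    intro B hB A hA
    rcases eq_or_lt_of_le hA with rfl | hlt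
    · exact ⟨RelSeries.singleton _ A, rfl, rfl⟩
    · have hs : {K : Subgroup H | A ≤ K ∧ K < B}.Finite := Set.toFinite _
      obtain ⟨M, hM, hmax⟩ := hs.exists_maximal ⟨A, le_refl A, hlt⟩
      have hMB : M ⋖ B := by
        refine ⟨hM.2, fun K h1 h2 => ?_⟩
        exact h1.ne (le_antisymm h1.le (hmax ⟨hM.1.trans h1.le, h2⟩ h1.le))
      have hcard : Nat.card M ≤ k := by
        have := card_lt_card_of_lt hM.2
        omega
      obtain ⟨p, hh, hl⟩ := ih M hcard A hM.1
      exact ⟨p.snoc B (hl ▸ hMB), by simp [hh], by simp⟩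

theorem exists_covSeries' [Finite H] (A B : Subgroup H) (hAB : A ≤ B) :
    ∃ p : CovSeries H, p.head = A ∧ p.last = B :=
  exists_covSeries (Nat.card B) B le_rfl A hAB

theorem exists_covSeries_of_strictMono [Finite H] {n : ℕ}
    (c : Fin (n+1) → Subgroup H) (hc : StrictMono c) :
    ∃ p : CovSeries H, p.head = c 0 ∧ p.last = c (Fin.last n) ∧ n ≤ p.length := by
  induction n with
  | zero => exact ⟨RelSeries.singleton _ (c 0), rfl, rfl, Nat.zero_le _⟩
  | succ n ih =>
    obtain ⟨p, h1, h2, h3⟩ := ih (c ∘ Fin.castSucc) (hc.comp Fin.strictMono_castSucc)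
    have hgap : c ((Fin.last n).castSucc) < c (Fin.last (n+1)) :=
      hc (Fin.castSucc_lt_last (Fin.last n))
    obtain ⟨q, hq1, hq2⟩ := exists_covSeries' _ _ hgap.le
    have hconn : p.last = q.head := by rw [h2, hq1]; rfl
    have hqlen : 1 ≤ q.length := by
      rcases Nat.eq_zero_or_pos q.length with h0 | h0
      · exact absurd (covSeries_head_eq_last_of_length_eq_zero q h0)
          (by rw [hq1, hq2]; exact hgap.ne)
      · exact h0
    refine ⟨p.smash q hconn, ?_, ?_, ?_⟩
    · rw [RelSeries.head_smash, h1]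
      simp
    · rw [RelSeries.last_smash, hq2]
    · simp only [RelSeries.smash_length]
      omega

theorem minGen_le_chainLength [Finite H] {n : ℕ} {c : Fin (n+1) → Subgroup H}
    (hc : IsUnrefinableChain c) : minGen H ≤ n := by
  classical
  obtain ⟨x, hx⟩ := exists_gen_of_covChain c hc.1 hc.2.2
  have htop : Subgroup.closure (Set.range x) = ⊤ := by
    rw [← partialClosure_last, hx, hc.2.1]
  have : Fintype H := Fintype.ofFinite H
  have hS : Subgroup.closure ((Finset.image x Finset.univ : Finset H) : Set H) = ⊤ := by
    rw [Finset.coe_image, Finset.coe_univ, Set.image_univ, htop]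
  calc minGen H ≤ (Finset.image x Finset.univ).card := minGen_le _ hS
    _ ≤ (Finset.univ : Finset (Fin n)).card := Finset.card_image_le
    _ = n := by simp

theorem strictMono_of_chain {n : ℕ} {c : Fin (n+1) → Subgroup H}
    (hstep : ∀ i : Fin n, c i.castSucc ⋖ c i.succ) : StrictMono c :=
  Fin.strictMono_iff_lt_succ.mpr fun i => (hstep i).lt

theorem chainLength_eq_minGen [Finite H] (hU : DUnifGen H (minGen H)) {n : ℕ}
    {c : Fin (n+1) → Subgroup H} (hc : IsUnrefinableChain c) : n = minGen H := by
  have hle : minGen H ≤ n := minGen_le_chainLength hc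
  rcases eq_or_lt_of_le hle with h | hlt
  · exact h.symm
  · exfalso
    set d := minGen H with hd
    obtain ⟨x, hx⟩ := exists_gen_of_covChain c hc.1 hc.2.2
    have hcmono : StrictMono c := strictMono_of_chain hc.2.2
    set y : Fin d → H := fun j => x (Fin.castLE hle j) with hy
    have hpcy : ∀ i : Fin (d+1), partialClosure y i = c (Fin.castLE (by omega) i) := by
      intro i
      have him : y '' {j : Fin d | (j : ℕ) < (i : ℕ)}
          = x '' {j : Fin n | (j : ℕ) < ((Fin.castLE (by omega : d+1 ≤ n+1) i : Fin (n+1)) : ℕ)} := by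
        ext g
        constructor
        · rintro ⟨j, hj, rfl⟩
          exact ⟨Fin.castLE hle j, by simpa using hj, rfl⟩
        · rintro ⟨j, hj, rfl⟩
          simp only [Fin.coe_castLE, Set.mem_setOf_eq] at hj
          have hjd : (j : ℕ) < d := lt_of_lt_of_le hj (Nat.lt_succ_iff.mp i.isLt)
          exact ⟨⟨(j : ℕ), hjd⟩, hj, congrArg x (Fin.ext rfl)⟩
      rw [partialClosure, him, ← partialClosure, hx]
    have hymono : StrictMono (partialClosure y) := by
      intro i j hij
      rw [hpcy, hpcy]
      exact hcmono (by simp only [Fin.lt_def, Fin.coe_castLE]; exact hij)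
    have hytop : Subgroup.closure (Set.range y) = ⊤ := hU.2 y hymono
    have : c (Fin.castLE (by omega) (Fin.last d)) = ⊤ := by
      rw [← hpcy, partialClosure_last, hytop]
    have hlt2 : c (Fin.castLE (by omega) (Fin.last d)) < c (Fin.last n) :=
      hcmono (by simp [Fin.lt_iff_val_lt_val, hlt])
    rw [this, hc.2.1] at hlt2
    exact lt_irrefl _ hlt2

end CovSeries

-- ===== transfer lemmas =====
section Transfer

variable {G : Type*} [Group G]
open Subgroup

theorem covBy_map_subtype {N : Subgroup G} {A B : Subgroup N} (h : A ⋖ B) :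
    A.map N.subtype ⋖ B.map N.subtype := by
  have hmaplt : ∀ {X Y : Subgroup N}, X < Y → X.map N.subtype < Y.map N.subtype := by
    intro X Y hXY
    refine lt_of_le_of_ne (Subgroup.map_mono hXY.le) (fun he => hXY.ne ?_)
    exact Subgroup.map_injective N.subtype_injective he
  refine ⟨hmaplt h.lt, fun K h1 h2 => ?_⟩
  have hKN : K ≤ N := h2.le.trans (Subgroup.map_subtype_le B)
  have hKmap : (K.comap N.subtype).map N.subtype = K :=
    Subgroup.map_comap_eq_self (by rwa [Subgroup.range_subtype])
  have hA : A < K.comap N.subtype := by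
    refine lt_of_le_of_ne ?_ ?_
    · intro a ha
      have : (a : G) ∈ K := h1.le ⟨a, ha, rfl⟩
      exact this
    · rintro rfl
      exact h1.ne hKmap
  have hB : K.comap N.subtype < B := by
    refine lt_of_le_of_ne ?_ ?_
    · intro a ha
      have : (a : G) ∈ B.map N.subtype := h2.le ha
      obtain ⟨b, hb, hba⟩ := this
      rwa [show a = b from Subtype.ext hba.symm]
    · rintro rfl
      exact h2.ne hKmap.symm
  exact h.2 hA hB

theorem covBy_comap_mk' {N : Subgroup G} [N.Normal] {A B : Subgroup (G ⧸ N)} (h : A ⋖ B) :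
    A.comap (QuotientGroup.mk' N) ⋖ B.comap (QuotientGroup.mk' N) := by
  have hsurj : Function.Surjective (QuotientGroup.mk' N) := QuotientGroup.mk'_surjective N
  refine ⟨(Subgroup.comap_lt_comap_of_surjective hsurj).mpr h.lt, fun K h1 h2 => ?_⟩
  have hNK : (QuotientGroup.mk' N).ker ≤ K := by
    calc (QuotientGroup.mk' N).ker = comap (QuotientGroup.mk' N) ⊥ :=
          (MonoidHom.comap_bot _).symm
      _ ≤ comap (QuotientGroup.mk' N) A := Subgroup.comap_mono bot_le
      _ ≤ K := h1.le
  have hKmap : comap (QuotientGroup.mk' N) (map (QuotientGroup.mk' N) K) = K := by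
    rw [Subgroup.comap_map_eq, sup_eq_left.mpr hNK]
  have hA : A < map (QuotientGroup.mk' N) K := by
    refine lt_of_le_of_ne ?_ ?_
    · rw [← Subgroup.map_comap_eq_self_of_surjective hsurj A]
      exact Subgroup.map_mono h1.le
    · intro he
      exact h1.ne (by rw [he, hKmap])
  have hB : map (QuotientGroup.mk' N) K < B := by
    refine lt_of_le_of_ne ?_ ?_
    · rw [Subgroup.map_le_iff_le_comap]
      exact h2.le
    · intro he
      exact h2.ne (by rw [← he, hKmap])
  exact h.2 hA hB

theorem chain_sum_mem (N : Subgroup G) [N.Normal] {a b : ℕ}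
    {c1 : Fin (a+1) → Subgroup N} (h1 : IsUnrefinableChain c1)
    {c2 : Fin (b+1) → Subgroup (G ⧸ N)} (h2 : IsUnrefinableChain c2) :
    ∃ c : Fin (a + b + 1) → Subgroup G, IsUnrefinableChain c := by
  let p : CovSeries G := ⟨a, fun i => (c1 i).map N.subtype, fun i => covBy_map_subtype (h1.2.2 i)⟩
  let q : CovSeries G := ⟨b, fun i => (c2 i).comap (QuotientGroup.mk' N),
    fun i => covBy_comap_mk' (h2.2.2 i)⟩
  have hplast : p.last = N := by
    show (c1 (Fin.last a)).map N.subtype = N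
    rw [h1.2.1, ← MonoidHom.range_eq_map, Subgroup.range_subtype]
  have hqhead : q.head = N := by
    show (c2 0).comap (QuotientGroup.mk' N) = N
    rw [h2.1, MonoidHom.comap_bot, QuotientGroup.ker_mk']
  have hconn : p.last = q.head := by rw [hplast, hqhead]
  refine ⟨(p.smash q hconn).toFun, ?_, ?_, fun i => (p.smash q hconn).step i⟩
  · have : (p.smash q hconn).head = ⊥ := by
      rw [RelSeries.head_smash]
      show (c1 0).map N.subtype = ⊥
      rw [h1.1, Subgroup.map_bot]
    exact this
  · have : (p.smash q hconn).last = ⊤ := by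
      rw [RelSeries.last_smash]
      show (c2 (Fin.last b)).comap (QuotientGroup.mk' N) = ⊤
      rw [h2.2.1, Subgroup.comap_top]
    exact this

theorem minGen_le_add [Finite G] (N : Subgroup G) [N.Normal]
    (SN : Finset N) (hSN : Subgroup.closure (SN : Set N) = ⊤)
    (SQ : Finset (G ⧸ N)) (hSQ : Subgroup.closure (SQ : Set (G ⧸ N)) = ⊤) :
    ∃ U : Finset G, U.card ≤ SN.card + SQ.card ∧ Subgroup.closure (U : Set G) = ⊤ := by
  classical
  let U : Finset G := SN.image N.subtype ∪ SQ.image Quotient.out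
  refine ⟨U, ?_, ?_⟩
  · calc U.card ≤ (SN.image N.subtype).card + (SQ.image Quotient.out).card :=
        Finset.card_union_le _ _
      _ ≤ SN.card + SQ.card := Nat.add_le_add Finset.card_image_le Finset.card_image_le
  · have hN : N ≤ Subgroup.closure (U : Set G) := by
      have : N = Subgroup.closure (N.subtype '' (SN : Set N)) := by
        rw [← MonoidHom.map_closure, hSN, ← MonoidHom.range_eq_map, Subgroup.range_subtype]
      rw [this]
      apply Subgroup.closure_mono
      intro g hg
      simp only [U, Finset.coe_union, Finset.coe_image, Set.mem_union]
      exact Or.inl hg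
    have hmap : Subgroup.map (QuotientGroup.mk' N) (Subgroup.closure (U : Set G)) = ⊤ := by
      rw [MonoidHom.map_closure, eq_top_iff, ← hSQ]
      apply Subgroup.closure_mono
      intro t ht
      refine ⟨t.out, ?_, QuotientGroup.out_eq' t⟩
      simp only [U, Finset.coe_union, Finset.coe_image, Set.mem_union]
      exact Or.inr ⟨t, ht, rfl⟩
    have := Subgroup.comap_map_eq (QuotientGroup.mk' N) (Subgroup.closure (U : Set G))
    rw [hmap, Subgroup.comap_top, QuotientGroup.ker_mk'] at this
    rw [this, sup_eq_left.mpr hN]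

end Transfer


/-- normal subgroups and quotients of a finite uniformly generated
group are uniformly generated. -/
theorem uniformlyGenerated_of_normal (G : Type*) [Group G] [Finite G]
    (hG : UniformlyGenerated G) (N : Subgroup G) [N.Normal] :
    UniformlyGenerated N ∧ UniformlyGenerated (G ⧸ N) := by
  classical
  obtain ⟨pN, hpN1, hpN2⟩ := exists_covSeries' (⊥ : Subgroup N) ⊤ bot_le
  obtain ⟨pQ, hpQ1, hpQ2⟩ := exists_covSeries' (⊥ : Subgroup (G ⧸ N)) ⊤ bot_le
  have hcN : IsUnrefinableChain pN.toFun := ⟨hpN1, hpN2, pN.step⟩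
  have hcQ : IsUnrefinableChain pQ.toFun := ⟨hpQ1, hpQ2, pQ.step⟩
  have hsum : ∀ {a : ℕ} {c1 : Fin (a+1) → Subgroup N}, IsUnrefinableChain c1 →
      ∀ {b : ℕ} {c2 : Fin (b+1) → Subgroup (G ⧸ N)}, IsUnrefinableChain c2 →
        a + b = minGen G := by
    intro a c1 h1 b c2 h2
    obtain ⟨c, hc⟩ := chain_sum_mem N h1 h2
    exact chainLength_eq_minGen hG hc
  have ha0b0 : pN.length + pQ.length = minGen G := hsum hcN hcQ
  have hNlen : ∀ {a : ℕ} {c1 : Fin (a+1) → Subgroup N}, IsUnrefinableChain c1 →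
      a = pN.length := by
    intro a c1 h1
    have := hsum h1 hcQ
    omega
  have hQlen : ∀ {b : ℕ} {c2 : Fin (b+1) → Subgroup (G ⧸ N)}, IsUnrefinableChain c2 →
      b = pQ.length := by
    intro b c2 h2
    have := hsum hcN h2
    omega
  have hdN : minGen N ≤ pN.length := minGen_le_chainLength hcN
  have hdQ : minGen (G ⧸ N) ≤ pQ.length := minGen_le_chainLength hcQ
  obtain ⟨SN, hSN1, hSN2⟩ := minGen_spec N
  obtain ⟨SQ, hSQ1, hSQ2⟩ := minGen_spec (G ⧸ N)
  obtain ⟨U, hU1, hU2⟩ := minGen_le_add N SN hSN2 SQ hSQ2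
  have hdG : minGen G ≤ minGen N + minGen (G ⧸ N) := by
    have := minGen_le U hU2
    omega
  have heqN : minGen N = pN.length := by omega
  have heqQ : minGen (G ⧸ N) = pQ.length := by omega
  constructor
  · refine ⟨Exists.imp (fun x hx => hx.1) (exists_strictMono_pc N), ?_⟩
    intro x hx
    by_contra hne
    obtain ⟨p, hh, hl, hlen⟩ := exists_covSeries_of_strictMono (partialClosure x) hx
    obtain ⟨q, hq1, hq2⟩ :=
      exists_covSeries' (Subgroup.closure (Set.range x)) (⊤ : Subgroup N) le_top
    have hconn : p.last = q.head := by rw [hl, hq1, partialClosure_last]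
    have hqlen : 1 ≤ q.length := by
      rcases Nat.eq_zero_or_pos q.length with h0 | h0
      · exact absurd (covSeries_head_eq_last_of_length_eq_zero q h0)
          (by rw [hq1, hq2]; exact hne)
      · exact h0
    have hchain : IsUnrefinableChain (p.smash q hconn).toFun := by
      refine ⟨?_, ?_, fun i => (p.smash q hconn).step i⟩
      · have : (p.smash q hconn).head = ⊥ := by
          rw [RelSeries.head_smash, hh, partialClosure_zero]
        exact this
      · have : (p.smash q hconn).last = ⊤ := by
          rw [RelSeries.last_smash, hq2]
        exact this
    have := hNlen hchain
    simp only [RelSeries.smash_length] at this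
    omega
  · refine ⟨Exists.imp (fun x hx => hx.1) (exists_strictMono_pc (G ⧸ N)), ?_⟩
    intro x hx
    by_contra hne
    obtain ⟨p, hh, hl, hlen⟩ := exists_covSeries_of_strictMono (partialClosure x) hx
    obtain ⟨q, hq1, hq2⟩ :=
      exists_covSeries' (Subgroup.closure (Set.range x)) (⊤ : Subgroup (G ⧸ N)) le_top
    have hconn : p.last = q.head := by rw [hl, hq1, partialClosure_last]
    have hqlen : 1 ≤ q.length := by
      rcases Nat.eq_zero_or_pos q.length with h0 | h0
      · exact absurd (covSeries_head_eq_last_of_length_eq_zero q h0)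
          (by rw [hq1, hq2]; exact hne)
      · exact h0
    have hchain : IsUnrefinableChain (p.smash q hconn).toFun := by
      refine ⟨?_, ?_, fun i => (p.smash q hconn).step i⟩
      · have : (p.smash q hconn).head = ⊥ := by
          rw [RelSeries.head_smash, hh, partialClosure_zero]
        exact this
      · have : (p.smash q hconn).last = ⊤ := by
          rw [RelSeries.last_smash, hq2]
        exact this
    have := hQlen hchain
    simp only [RelSeries.smash_length] at this
    omega
end

section
/- If G is a finite uniformly generated group, then the Frattini subgroup Φ(G) is trivial. -/
section Aux
variable {G : Type*} [Group G]

open scoped Classical in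
/-- Auxiliary sequence: `(aux x1 n).2` is the subgroup generated by the first `n`
elements of the chain, `(aux x1 n).1` is the next element to add. -/
noncomputable def uniChainAux (x1 : G) : ℕ → G × Subgroup G
  | 0 => (x1, ⊥)
  | n + 1 =>
    let H := (uniChainAux x1 n).2 ⊔ Subgroup.zpowers (uniChainAux x1 n).1
    (if h : ∃ g, g ∉ H then h.choose else 1, H)

open scoped Classical in
lemma uniChainAux_fst_succ (x1 : G) (n : ℕ) :
    (uniChainAux x1 (n + 1)).1 = if h : ∃ g,
      g ∉ (uniChainAux x1 n).2 ⊔ Subgroup.zpowers (uniChainAux x1 n).1 then h.choose else 1 := by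
  rw [uniChainAux]

lemma uniChainAux_snd_zero (x1 : G) : (uniChainAux x1 0).2 = ⊥ := by rw [uniChainAux]

lemma uniChainAux_snd_succ (x1 : G) (n : ℕ) :
    (uniChainAux x1 (n + 1)).2 =
      (uniChainAux x1 n).2 ⊔ Subgroup.zpowers (uniChainAux x1 n).1 := rfl

lemma uniChainAux_gen (x1 : G) (n : ℕ) :
    ∃ S : Finset G, S.card ≤ n ∧ Subgroup.closure (S : Set G) = (uniChainAux x1 n).2 := by
  classical
  induction n with
  | zero => exact ⟨∅, le_rfl, by simp [uniChainAux]⟩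
  | succ n ih =>
    obtain ⟨S, hS, hcl⟩ := ih
    refine ⟨insert (uniChainAux x1 n).1 S, ?_, ?_⟩
    · exact (Finset.card_insert_le _ _).trans (by omega)
    · rw [uniChainAux_snd_succ, Finset.coe_insert, Set.insert_eq, Subgroup.closure_union,
        hcl, ← Subgroup.zpowers_eq_closure, sup_comm]
end Aux

/-- a finite uniformly generated group has trivial Frattini subgroup. -/
theorem frattini_eq_bot_of_uniformlyGenerated (G : Type*) [Group G] [Finite G]
    (hG : UniformlyGenerated G) : frattini G = ⊥ := by
  classical
  by_contra hbot
  obtain ⟨x1, hx1mem, hx1⟩ : ∃ x1 ∈ frattini G, x1 ≠ 1 := by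
    by_contra h
    push_neg at h
    exact hbot (by ext g; simp only [Subgroup.mem_bot]; exact ⟨fun hg => h g hg, by rintro rfl; exact (frattini G).one_mem⟩)
  set d := minGen G with hd
  have hne : {n | ∃ S : Finset G, S.card = n ∧ Subgroup.closure (S : Set G) = ⊤}.Nonempty := by
    have := Fintype.ofFinite G
    exact ⟨(Finset.univ : Finset G).card, Finset.univ, rfl, by simp⟩
  have hd_le : ∀ S : Finset G, Subgroup.closure (S : Set G) = ⊤ → d ≤ S.card := by
    intro S hS
    exact Nat.sInf_le ⟨S, rfl, hS⟩
  have hdpos : 0 < d := by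
    rcases Nat.eq_zero_or_pos d with h0 | h
    · exfalso
      have hmem : d ∈ {n | ∃ S : Finset G, S.card = n ∧ Subgroup.closure (S : Set G) = ⊤} :=
        Nat.sInf_mem hne
      rw [h0] at hmem
      obtain ⟨S, hcard, hcl⟩ := hmem
      rw [Finset.card_eq_zero] at hcard
      subst hcard
      simp only [Finset.coe_empty, Subgroup.closure_empty] at hcl
      exact hbot (le_bot_iff.mp (hcl ▸ le_top))
    · exact h
  -- key invariant
  have key : ∀ n < d, (uniChainAux x1 n).2 ≠ ⊤ ∧ (uniChainAux x1 n).1 ∉ (uniChainAux x1 n).2 := by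
    intro n hn
    have hne_top : (uniChainAux x1 n).2 ≠ ⊤ := by
      intro htop
      obtain ⟨S, hcard, hcl⟩ := uniChainAux_gen x1 n
      have := hd_le S (hcl.trans htop)
      omega
    refine ⟨hne_top, ?_⟩
    match n with
    | 0 => simpa [uniChainAux] using hx1
    | n + 1 =>
      have hex : ∃ g, g ∉ (uniChainAux x1 n).2 ⊔ Subgroup.zpowers (uniChainAux x1 n).1 := by
        by_contra h
        push_neg at h
        exact hne_top (by rw [uniChainAux_snd_succ]; exact Subgroup.eq_top_iff' _ |>.mpr h)
      show (uniChainAux x1 (n+1)).1 ∉ _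
      rw [uniChainAux_fst_succ, dif_pos hex, uniChainAux_snd_succ]
      exact hex.choose_spec
  set x : Fin d → G := fun i => (uniChainAux x1 (i : ℕ)).1 with hx
  have hpc : ∀ n (hn : n < d + 1), partialClosure x ⟨n, hn⟩ = (uniChainAux x1 n).2 := by
    intro n
    induction n with
    | zero =>
      intro hn
      show Subgroup.closure (x '' {j : Fin d | (j : ℕ) < 0}) = _
      have he : (x '' {j : Fin d | (j : ℕ) < 0}) = ∅ := by
        ext g; simp
      rw [he, Subgroup.closure_empty, uniChainAux_snd_zero]
    | succ m ih =>
      intro hn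
      have hm : m < d + 1 := by omega
      have hml : m < d := by omega
      have hprev := ih hm
      show Subgroup.closure (x '' {j : Fin d | (j : ℕ) < m + 1}) = _
      have hset : (x '' {j : Fin d | (j : ℕ) < m + 1}) =
          (x '' {j : Fin d | (j : ℕ) < m}) ∪ {x ⟨m, hml⟩} := by
        have hdom : {j : Fin d | (j : ℕ) < m + 1} =
            {j : Fin d | (j : ℕ) < m} ∪ {⟨m, hml⟩} := by
          ext j
          constructor
          · intro hj
            rcases Nat.lt_succ_iff_lt_or_eq.mp hj with h | h
            · exact Or.inl h
            · exact Or.inr (Fin.ext h)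
          · rintro (h | rfl)
            · exact Nat.lt_succ_of_lt h
            · exact Nat.lt_succ_self m
        rw [hdom, Set.image_union, Set.image_singleton]
      rw [hset, Subgroup.closure_union,
        show Subgroup.closure (x '' {j : Fin d | (j : ℕ) < m}) = (uniChainAux x1 m).2 from hprev,
        ← Subgroup.zpowers_eq_closure, uniChainAux_snd_succ]
  have hpc' : ∀ j : Fin (d + 1), partialClosure x j = (uniChainAux x1 (j : ℕ)).2 := by
    intro j
    obtain ⟨n, hn⟩ := j
    exact hpc n hn
  have hsm : StrictMono (partialClosure x) := by
    rw [Fin.strictMono_iff_lt_succ]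
    intro i
    have hi : (i : ℕ) < d := i.isLt
    obtain ⟨-, hnotin⟩ := key i hi
    have e1 := hpc' i.castSucc
    have e2 := hpc' i.succ
    rw [Fin.coe_castSucc] at e1
    rw [Fin.val_succ] at e2
    rw [e1, e2, uniChainAux_snd_succ, SetLike.lt_iff_le_and_exists]
    exact ⟨le_sup_left, (uniChainAux x1 (i : ℕ)).1,
      Subgroup.mem_sup_right (Subgroup.mem_zpowers _), hnotin⟩
  have htop := hG.2 x hsm
  -- now the Frattini argument
  set S : Finset G := Finset.univ.image x with hS
  have hclS : Subgroup.closure (S : Set G) = ⊤ := by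
    rwa [hS, Finset.coe_image, Finset.coe_univ, Set.image_univ]
  have hx1S : x1 ∈ S := by
    rw [hS]
    refine Finset.mem_image.mpr ⟨⟨0, hdpos⟩, Finset.mem_univ _, ?_⟩
    simp [hx, uniChainAux]
  have hKtop : Subgroup.closure ((S.erase x1 : Finset G) : Set G) = ⊤ := by
    apply frattini_nongenerating
    rw [eq_top_iff, ← hclS]
    have : (S : Set G) ⊆ ((S.erase x1 : Finset G) : Set G) ∪ {x1} := by
      intro g hg
      rcases eq_or_ne g x1 with rfl | hne
      · exact Or.inr rfl
      · exact Or.inl (by rw [Finset.coe_erase]; exact ⟨hg, hne⟩)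
    refine (Subgroup.closure_mono this).trans ?_
    rw [Subgroup.closure_union]
    apply sup_le_sup_left
    rw [Subgroup.closure_le]
    simpa using hx1mem
  have h1 := hd_le _ hKtop
  have h2 : (S.erase x1).card = S.card - 1 := Finset.card_erase_of_mem hx1S
  have h3 : S.card ≤ d := (Finset.card_image_le).trans (by simp)
  omega
end

section
/- If G is a finite uniformly generated group, then its Fitting subgroup Fit(G) is elementary abelian. -/
namespace UGAux

open Subgroup

variable {G : Type*} [Group G]

/-- The subgroup generated by `H` together with the elements of `l`. -/
def final (H : Subgroup G) : List G → Subgroup G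
  | [] => H
  | g :: l => final (H ⊔ Subgroup.zpowers g) l

/-- Each element of `l` lies outside the subgroup generated by `H` and the previous ones. -/
def good (H : Subgroup G) : List G → Prop
  | [] => True
  | g :: l => g ∉ H ∧ good (H ⊔ Subgroup.zpowers g) l

lemma final_append (H : Subgroup G) (a b : List G) :
    final H (a ++ b) = final (final H a) b := by
  induction a generalizing H with
  | nil => rfl
  | cons g m ih => simpa [final] using ih _

lemma good_append {H : Subgroup G} {a b : List G} (ha : good H a) (hb : good (final H a) b) :
    good H (a ++ b) := by
  induction a generalizing H with
  | nil => exact hb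
  | cons g m ih => exact ⟨ha.1, ih ha.2 hb⟩

lemma good_take {H : Subgroup G} {l : List G} (h : good H l) (n : ℕ) : good H (l.take n) := by
  induction l generalizing H n with
  | nil => simp [good]
  | cons g m ih =>
    cases n with
    | zero => trivial
    | succ n => exact ⟨h.1, ih h.2 n⟩

lemma le_final (H : Subgroup G) (l : List G) : H ≤ final H l := by
  induction l generalizing H with
  | nil => exact le_rfl
  | cons g m ih => exact le_trans le_sup_left (ih _)

lemma final_eq (H : Subgroup G) (l : List G) :
    final H l = H ⊔ Subgroup.closure {a | a ∈ l} := by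
  induction l generalizing H with
  | nil => simp [final]
  | cons g m ih =>
    rw [final, ih]
    have : {a | a ∈ g :: m} = {g} ∪ {a | a ∈ m} := by
      ext a; simp [List.mem_cons]
    rw [this, Subgroup.closure_union, ← Subgroup.zpowers_eq_closure, sup_assoc]

lemma getElem_not_mem {H : Subgroup G} {l : List G} (h : good H l) (i : ℕ) (hi : i < l.length) :
    l[i] ∉ final H (l.take i) := by
  induction l generalizing H i with
  | nil => simp at hi
  | cons g m ih =>
    cases i with
    | zero => simpa [final] using h.1
    | succ i => simpa [final] using ih h.2 i (by simpa using hi)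

lemma final_take_succ (H : Subgroup G) (l : List G) (i : ℕ) (hi : i < l.length) :
    final H (l.take (i + 1)) = final H (l.take i) ⊔ Subgroup.zpowers l[i] := by
  have h1 : l.take (i + 1) = l.take i ++ [l[i]] := by
    rw [List.take_succ, List.getElem?_eq_getElem hi]
    rfl
  rw [h1, final_append]
  rfl

lemma final_take_lt {H : Subgroup G} {l : List G} (h : good H l) (i : ℕ) (hi : i < l.length) :
    final H (l.take i) < final H (l.take (i + 1)) := by
  rw [final_take_succ H l i hi]
  refine lt_of_le_of_ne le_sup_left (fun he => ?_)
  exact getElem_not_mem h i hi (he ▸ Subgroup.mem_sup_right (Subgroup.mem_zpowers _))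

/-- Bridge: partial closures of an indexing of a prefix of `l` agree with `final`. -/
lemma partialClosure_eq (l : List G) (n : ℕ) (hn : n ≤ l.length)
    (x : Fin n → G) (hx : ∀ i : Fin n, x i = l[(i : ℕ)]'(lt_of_lt_of_le i.isLt hn))
    (i : Fin (n + 1)) :
    partialClosure x i = final ⊥ (l.take i) := by
  rw [final_eq, bot_sup_eq, partialClosure]
  congr 1
  ext a
  constructor
  · rintro ⟨j, hj, rfl⟩
    rw [hx j]
    have hj' : (j : ℕ) < (l.take (i : ℕ)).length := by
      simp only [List.length_take]
      exact lt_min hj (lt_of_lt_of_le j.isLt hn)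
    refine List.mem_iff_getElem.2 ⟨j, hj', ?_⟩
    simp [List.getElem_take]
  · intro ha
    obtain ⟨j, hj, rfl⟩ := List.mem_iff_getElem.1 ha
    have hj1 : j < (i : ℕ) := lt_of_lt_of_le hj (by simp [List.length_take])
    have hj2 : j < n := lt_of_lt_of_le hj1 (Nat.lt_succ_iff.1 i.isLt)
    refine ⟨⟨j, hj2⟩, hj1, ?_⟩
    rw [hx ⟨j, hj2⟩]
    simp [List.getElem_take]

lemma strictMono_of_good {l : List G} (h : good ⊥ l) (n : ℕ) (hn : n ≤ l.length)
    (x : Fin n → G) (hx : ∀ i : Fin n, x i = l[(i : ℕ)]'(lt_of_lt_of_le i.isLt hn)) :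
    StrictMono (partialClosure x) := by
  rw [Fin.strictMono_iff_lt_succ]
  intro i
  rw [partialClosure_eq l n hn x hx, partialClosure_eq l n hn x hx]
  simp only [Fin.coe_castSucc, Fin.val_succ]
  exact final_take_lt h i (lt_of_lt_of_le i.isLt hn)

lemma closure_range_eq (l : List G) (n : ℕ) (hn : n ≤ l.length)
    (x : Fin n → G) (hx : ∀ i : Fin n, x i = l[(i : ℕ)]'(lt_of_lt_of_le i.isLt hn)) :
    Subgroup.closure (Set.range x) = final ⊥ (l.take n) := by
  have := partialClosure_eq l n hn x hx (Fin.last n)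
  rw [partialClosure] at this
  simp only [Fin.val_last] at this
  rw [← this]
  congr 1
  ext a
  simp only [Set.mem_range, Set.mem_image, Set.mem_setOf_eq, Fin.val_last]
  exact ⟨fun ⟨j, hj⟩ => ⟨j, j.isLt, hj⟩, fun ⟨j, _, hj⟩ => ⟨j, hj⟩⟩

variable [Finite G]

/-- Any `good` chain from `⊥` has length at most `minGen G`, in a uniformly generated group. -/
lemma length_le {l : List G} (hG : UniformlyGenerated G) (h : good ⊥ l) :
    l.length ≤ minGen G := by
  by_contra hlen
  push_neg at hlen
  set d := minGen G with hd
  have hdl : d < l.length := hlen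
  set x : Fin d → G := fun i => l[(i : ℕ)]'(lt_of_lt_of_le i.isLt (le_of_lt hdl)) with hxdef
  have hx : ∀ i : Fin d, x i = l[(i : ℕ)]'(lt_of_lt_of_le i.isLt (le_of_lt hdl)) := fun i => rfl
  have hsm : StrictMono (partialClosure x) :=
    strictMono_of_good h d (le_of_lt hdl) x hx
  have htop := hG.2 x hsm
  rw [closure_range_eq l d (le_of_lt hdl) x hx] at htop
  exact getElem_not_mem h d hdl (htop ▸ Subgroup.mem_top _)

/-- If the elements of `l` generate `⊤`, then `minGen G ≤ l.length`. -/
lemma minGen_le {l : List G} (h : final ⊥ l = ⊤) : minGen G ≤ l.length := by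
  classical
  rw [final_eq, bot_sup_eq] at h
  have hset : {a | a ∈ l} = (l.toFinset : Set G) := by ext a; simp
  rw [hset] at h
  calc minGen G ≤ l.toFinset.card := Nat.sInf_le ⟨l.toFinset, rfl, h⟩
    _ ≤ l.length := l.toFinset_card_le

/-- Every subgroup admits a good chain up to `⊤`. -/
lemma exists_tail (H : Subgroup G) : ∃ w : List G, good H w ∧ final H w = ⊤ := by
  have wf : WellFounded ((· > ·) : Subgroup G → Subgroup G → Prop) := IsWellFounded.wf
  induction H using WellFounded.induction wf with
  | _ H ih =>
    by_cases hH : H = ⊤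
    · exact ⟨[], trivial, hH⟩
    · have : ∃ g, g ∉ H := by
        by_contra hg; push_neg at hg
        exact hH (Subgroup.eq_top_iff' H |>.2 hg)
      obtain ⟨g, hg⟩ := this
      have hlt : H < H ⊔ Subgroup.zpowers g :=
        lt_of_le_of_ne le_sup_left
          (fun he => hg (he ▸ Subgroup.mem_sup_right (Subgroup.mem_zpowers g)))
      obtain ⟨w, hw1, hw2⟩ := ih _ hlt
      exact ⟨g :: w, ⟨hg, hw1⟩, hw2⟩

/-- KEY: two good chains from `⊥` to the same subgroup have the same length. -/
lemma key (hG : UniformlyGenerated G) {l₁ l₂ : List G}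
    (h₁ : good ⊥ l₁) (h₂ : good ⊥ l₂) (he : final ⊥ l₁ = final ⊥ l₂)
    (hlt : l₂.length < l₁.length) : False := by
  obtain ⟨w, hw1, hw2⟩ := exists_tail (final ⊥ l₁)
  have g1 : good ⊥ (l₁ ++ w) := good_append h₁ hw1
  have g2 : good ⊥ (l₂ ++ w) := good_append h₂ (he ▸ hw1)
  have f2 : final ⊥ (l₂ ++ w) = ⊤ := by rw [final_append, ← he, hw2]
  have hle1 : (l₁ ++ w).length ≤ minGen G := length_le hG g1
  have hle2 : minGen G ≤ (l₂ ++ w).length := minGen_le f2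
  simp only [List.length_append] at hle1 hle2
  omega

end UGAux

lemma center_witness {K : Type*} [Group K] [hn : Group.IsNilpotent K] [Nontrivial K] :
    ∃ z : K, z ∈ Subgroup.center K ∧ z ≠ 1 := by
  by_contra hc
  push_neg at hc
  have hcbot : Subgroup.center K = ⊥ := by
    rw [eq_bot_iff]
    intro z hz
    rw [Subgroup.mem_bot]
    exact hc z hz
  have hucs : ∀ n, Subgroup.upperCentralSeries K n = ⊥ := by
    intro n
    induction n with
    | zero => exact upperCentralSeries_zero K
    | succ n ih =>
      rw [eq_bot_iff]
      intro x hx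
      rw [mem_upperCentralSeries_succ_iff] at hx
      rw [Subgroup.mem_bot]
      have hxc : x ∈ Subgroup.center K := by
        rw [Subgroup.mem_center_iff]
        intro y
        have := hx y
        rw [ih, Subgroup.mem_bot] at this
        exact (mul_inv_eq_one.1 (by rw [mul_inv_rev, ← mul_assoc]; exact this)).symm
      rw [hcbot, Subgroup.mem_bot] at hxc
      exact hxc
  obtain ⟨n, hn'⟩ := hn.nilpotent
  rw [hucs n] at hn'
  exact bot_ne_top hn'

lemma addAux {A : Type*} [AddCommGroup A] [Finite A] (p : ℕ) (hp : p.Prime)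
    (he : ∀ x : A, p • x = 0) : ∃ k : ℕ, Nonempty (A ≃+ (Fin k → ZMod p)) := by
  haveI : NeZero p := ⟨hp.ne_zero⟩
  haveI : Fact p.Prime := ⟨hp⟩
  letI instM : Module (ZMod p) A := AddCommGroup.zmodModule he
  haveI instFin : Module.Finite (ZMod p) A := Module.Finite.of_finite
  haveI instFree : Module.Free (ZMod p) A := Module.Free.of_divisionRing _ _
  let b := @Module.finBasis (ZMod p) A _ _ instM instFree _ instFin
  exact ⟨_, ⟨b.equivFun.toAddEquiv⟩⟩

lemma elemAb_of {K : Type*} [Group K] [Finite K] (p : ℕ) (hp : p.Prime)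
    (hc : ∀ a b : K, a * b = b * a) (he : ∀ x : K, x ^ p = 1) :
    IsElementaryAbelian K := by
  letI : CommGroup K := { (inferInstance : Group K) with mul_comm := hc }
  obtain ⟨k, ⟨e⟩⟩ := addAux (A := Additive K) p hp (fun x => by
    show (Additive.toMul x) ^ p = 1
    exact he _)
  refine ⟨p, k, hp, ⟨?_⟩⟩
  exact (MulEquiv.multiplicativeAdditive K).symm.trans
    ((AddEquiv.toMultiplicative e).trans (MulEquiv.funMultiplicative _ _))


lemma prime_order {G : Type*} [Group G] [Finite G] (hG : UniformlyGenerated G)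
    (g : G) (hg : g ≠ 1) : (orderOf g).Prime := by
  set n := orderOf g with hn
  have hn0 : n ≠ 0 := (orderOf_pos g).ne'
  have hn1 : n ≠ 1 := by
    intro h
    exact hg (orderOf_eq_one_iff.1 h)
  by_contra hnp
  obtain ⟨p, hp, hpdvd⟩ := Nat.exists_prime_and_dvd hn1
  have hpn : p ≠ n := fun h => hnp (h ▸ hp)
  have hplt : p < n := lt_of_le_of_ne (Nat.le_of_dvd (Nat.pos_of_ne_zero hn0) hpdvd) hpn
  set h : G := g ^ (n / p) with hh
  have hhp : h ^ p = 1 := by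
    rw [hh, ← pow_mul, Nat.div_mul_cancel hpdvd, hn, pow_orderOf_eq_one]
  have hnp0 : n / p ≠ 0 := by
    intro hz
    rw [Nat.div_eq_zero_iff, or_iff_right hp.ne_zero] at hz
    omega
  have hh1 : h ≠ 1 := by
    intro hone
    have : n ∣ n / p := by
      rw [hn]; exact orderOf_dvd_of_pow_eq_one (hh ▸ hone)
    have := Nat.le_of_dvd (Nat.pos_of_ne_zero hnp0) this
    have : n / p < n := Nat.div_lt_self (Nat.pos_of_ne_zero hn0) hp.one_lt
    omega
  have hgh : g ∉ Subgroup.zpowers h := by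
    intro hmem
    obtain ⟨k, hk⟩ := hmem
    have : g ^ p = 1 := by
      rw [← hk, ← zpow_natCast, ← zpow_mul, mul_comm, zpow_mul]
      norm_cast
      rw [hhp, one_zpow]
    have : n ∣ p := hn ▸ orderOf_dvd_of_pow_eq_one this
    have := Nat.le_of_dvd hp.pos this
    omega
  refine UGAux.key hG (l₁ := [h, g]) (l₂ := [g]) ?_ ?_ ?_ (by simp)
  · refine ⟨by simpa [Subgroup.mem_bot] using hh1, ?_, trivial⟩
    simpa [bot_sup_eq] using hgh
  · exact ⟨by simpa [Subgroup.mem_bot] using hg, trivial⟩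
  · show UGAux.final (⊥ ⊔ Subgroup.zpowers h) [g] = UGAux.final (⊥ ⊔ Subgroup.zpowers g) []
    show (⊥ ⊔ Subgroup.zpowers h) ⊔ Subgroup.zpowers g = ⊥ ⊔ Subgroup.zpowers g
    rw [bot_sup_eq, bot_sup_eq, sup_eq_right]
    rw [Subgroup.zpowers_le]
    exact hh ▸ Subgroup.npow_mem_zpowers g (n / p)

lemma fitting_abelian {G : Type*} [Group G] [Finite G] (hG : UniformlyGenerated G)
    (F : Subgroup G) (hnil : Group.IsNilpotent ↥F) :
    ∀ a ∈ F, ∀ b ∈ F, a * b = b * a := by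
  intro a ha b hb
  by_contra hab
  have ha1 : a ≠ 1 := by rintro rfl; exact hab (by group)
  set H : Subgroup G := Subgroup.closure {a, b} with hH
  have hHF : H ≤ F := by
    rw [hH, Subgroup.closure_le]
    rintro x (rfl | rfl) <;> assumption
  have haH : a ∈ H := Subgroup.subset_closure (by simp)
  have hbH : b ∈ H := Subgroup.subset_closure (by simp)
  haveI : Group.IsNilpotent ↥F := hnil
  haveI hnilH : Group.IsNilpotent ↥H :=
    nilpotent_of_mulEquiv (Subgroup.subgroupOfEquivOfLe hHF)
  haveI : Nontrivial ↥H := by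
    refine ⟨⟨a, haH⟩, 1, ?_⟩
    simp [Subtype.ext_iff, ha1]
  obtain ⟨z', hz'c, hz'1⟩ := center_witness (K := ↥H)
  set z : G := (z' : G) with hz
  have hzH : z ∈ H := z'.2
  have hz1 : z ≠ 1 := fun h => hz'1 (Subtype.ext h)
  have hzcomm : ∀ w ∈ H, z * w = w * z := by
    intro w hw
    exact congrArg Subtype.val ((Subgroup.mem_center_iff.1 hz'c) ⟨w, hw⟩) |>.symm
  have hcza : Commute z a := (hzcomm a haH)
  have hczb : Commute z b := (hzcomm b hbH)
  -- the two elements a, b do not commute, basic consequences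
  have hba : b ∉ Subgroup.zpowers a := by
    intro hmem
    obtain ⟨k, hk⟩ := hmem
    exact hab (hk ▸ (Commute.refl a).zpow_right k)
  have haz : a ∉ Subgroup.zpowers z := by
    intro hmem
    obtain ⟨k, hk⟩ := hmem
    exact hab (hk ▸ hczb.zpow_left k)
  have hbza : b ∉ Subgroup.zpowers z ⊔ Subgroup.zpowers a := by
    intro hmem
    have hsub : Subgroup.zpowers z ⊔ Subgroup.zpowers a ≤ Subgroup.centralizer {a} := by
      refine sup_le ?_ ?_ <;> rw [Subgroup.zpowers_le, Subgroup.mem_centralizer_iff]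
      · rintro y rfl; exact hcza.symm
      · rintro y rfl; rfl
    have := Subgroup.mem_centralizer_iff.1 (hsub hmem) a rfl
    exact hab this
  have hAB : Subgroup.zpowers a ⊔ Subgroup.zpowers b = H := by
    rw [hH, Subgroup.zpowers_eq_closure, Subgroup.zpowers_eq_closure, ← Subgroup.closure_union]
    congr 1
  refine UGAux.key hG (l₁ := [z, a, b]) (l₂ := [a, b]) ?_ ?_ ?_ (by simp)
  · refine ⟨by simpa [Subgroup.mem_bot] using hz1, ?_, ?_, trivial⟩
    · simpa [bot_sup_eq] using haz
    · simpa [bot_sup_eq] using hbza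
  · refine ⟨by simpa [Subgroup.mem_bot] using ha1, ?_, trivial⟩
    simpa [bot_sup_eq] using hba
  · show ((⊥ ⊔ Subgroup.zpowers z) ⊔ Subgroup.zpowers a) ⊔ Subgroup.zpowers b =
      (⊥ ⊔ Subgroup.zpowers a) ⊔ Subgroup.zpowers b
    rw [bot_sup_eq, bot_sup_eq, sup_assoc, hAB]
    exact sup_eq_right.2 (Subgroup.zpowers_le.2 hzH)

/-- the Fitting subgroup (the largest normal nilpotent subgroup) of a
finite uniformly generated group is elementary abelian. -/
theorem fitting_isElementaryAbelian (G : Type*) [Group G] [Finite G]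
    (hG : UniformlyGenerated G) (F : Subgroup G)
    (hF : IsGreatest {N : Subgroup G | N.Normal ∧ Group.IsNilpotent ↥N} F) :
    IsElementaryAbelian ↥F := by
  have hnil : Group.IsNilpotent ↥F := hF.1.2
  have comm := fitting_abelian hG F hnil
  have hc : ∀ x y : ↥F, x * y = y * x := fun x y => Subtype.ext (comm x x.2 y y.2)
  by_cases hex : ∃ x : ↥F, x ≠ (1 : ↥F)
  · obtain ⟨a, ha⟩ := hex
    have haG : (a : G) ≠ 1 := fun h => ha (Subtype.ext h)
    set p := orderOf (a : G) with hpdef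
    have hpp : p.Prime := prime_order hG _ haG
    have he : ∀ x : ↥F, x ^ p = 1 := by
      intro x
      refine Subtype.ext ?_
      have hxp : ((x ^ p : ↥F) : G) = ((x : ↥F) : G) ^ p := by push_cast; rfl
      rw [hxp]
      show ((x : ↥F) : G) ^ p = (1 : G)
      by_cases hx1 : ((x : ↥F) : G) = 1
      · rw [hx1, one_pow]
      · have hq : (orderOf ((x : ↥F) : G)).Prime := prime_order hG _ hx1
        by_cases hqp : orderOf ((x : ↥F) : G) = p
        · rw [← hqp, pow_orderOf_eq_one]
        · exfalso
          have hcop : (Nat.Coprime p (orderOf ((x : ↥F) : G))) :=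
            (Nat.coprime_primes hpp hq).2 (fun h => hqp h.symm)
          have hcomm : Commute ((a : ↥F) : G) ((x : ↥F) : G) := comm _ a.2 _ x.2
          have horder := hcomm.orderOf_mul_eq_mul_orderOf_of_coprime hcop
          have hax1 : ((a : ↥F) : G) * ((x : ↥F) : G) ≠ 1 := by
            intro h
            rw [h, orderOf_one] at horder
            have h2 := hpp.two_le
            have h3 := hq.two_le
            nlinarith
          have hprime := prime_order hG _ hax1
          rw [horder] at hprime
          rcases Nat.prime_mul_iff.1 hprime with ⟨_, h1⟩ | ⟨_, h1⟩
          · exact hq.one_lt.ne' h1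
          · exact hpp.one_lt.ne' h1
    exact elemAb_of p hpp hc he
  · push_neg at hex
    have he : ∀ x : ↥F, x ^ 2 = 1 := fun x => by rw [hex x]; exact one_pow 2
    exact elemAb_of 2 Nat.prime_two hc he
end

section
/- If G is a finite nilpotent group with trivial Frattini subgroup whose order is divisible by at least two distinct primes, then d(G) < m(G), where m(G) is the maximal size of an independent generating set. -/
section AuxSF
open Subgroup

variable {G : Type*} [Group G]

lemma auxSF_mem_frattini {x : G} (h : ∀ M : Subgroup G, IsCoatom M → x ∈ M) :
    x ∈ frattini G := by
  have : frattini G = ⨅ M ∈ {H : Subgroup G | IsCoatom H}, M := rfl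
  rw [this]
  simp only [Subgroup.mem_iInf, Set.mem_setOf_eq]
  exact h

lemma auxSF_coatom_subgroups (M : Subgroup G) [M.Normal] (hM : IsCoatom M)
    (K : Subgroup (G ⧸ M)) : K = ⊥ ∨ K = ⊤ := by
  have hs : Function.Surjective (QuotientGroup.mk' M) := QuotientGroup.mk'_surjective M
  have h1 : M ≤ K.comap (QuotientGroup.mk' M) := by
    intro m hm
    have : (QuotientGroup.mk' M) m = 1 := (QuotientGroup.eq_one_iff m).mpr hm
    simp only [Subgroup.mem_comap, this]
    exact K.one_mem
  rcases h1.lt_or_eq with h2 | h2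
  · right
    have h3 : K.comap (QuotientGroup.mk' M) = ⊤ := hM.2 _ h2
    have := Subgroup.map_comap_eq_self_of_surjective hs K
    rw [h3] at this
    rw [← this]
    exact Subgroup.map_top_of_surjective _ hs
  · left
    have := Subgroup.map_comap_eq_self_of_surjective hs K
    rw [← h2] at this
    rw [← this, eq_bot_iff]
    rintro y ⟨g, hg, rfl⟩
    simp only [Subgroup.mem_bot]
    exact (QuotientGroup.eq_one_iff g).mpr hg

lemma auxSF_quotient_comm (M : Subgroup G) [M.Normal] (hM : IsCoatom M)
    (x y : G ⧸ M) : Commute x y := by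
  rcases eq_or_ne x 1 with h | h
  · simp [h]
  · have hz : Subgroup.zpowers x = ⊤ :=
      (auxSF_coatom_subgroups M hM _).resolve_left (by simpa [Subgroup.zpowers_eq_bot] using h)
    have hy : y ∈ Subgroup.zpowers x := hz ▸ Subgroup.mem_top y
    obtain ⟨n, rfl⟩ := hy
    exact (Commute.refl x).zpow_right n

open scoped commutatorElement in
lemma auxSF_comm {G : Type*} [Group G] [Finite G] [Group.IsNilpotent G]
    (hPhi : frattini G = ⊥) (a b : G) : Commute a b := by
  have h : ⁅a, b⁆ ∈ frattini G := by
    apply auxSF_mem_frattini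
    intro M hM
    haveI : M.Normal :=
      Subgroup.NormalizerCondition.normal_of_coatom M (normalizerCondition_of_isNilpotent) hM
    have hc : Commute ((a : G ⧸ M)) ((b : G ⧸ M)) := auxSF_quotient_comm M hM _ _
    have h1 : ((⁅a, b⁆ : G) : G ⧸ M) = 1 := by
      have := commutatorElement_eq_one_iff_commute.mpr hc
      simpa [commutatorElement_def] using this
    exact (QuotientGroup.eq_one_iff _).mp h1
  rw [hPhi, Subgroup.mem_bot] at h
  exact commutatorElement_eq_one_iff_commute.mp h

lemma auxSF_squarefree [Finite G] [Group.IsNilpotent G] (hΦ : frattini G = ⊥) (x : G) :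
    Squarefree (orderOf x) := by
  rw [Nat.squarefree_iff_prime_squarefree]
  intro r hr hdvd
  have hrp : r.Prime := hr
  haveI : Fact r.Prime := ⟨hrp⟩
  set n := orderOf x with hn
  have hnpos : 0 < n := orderOf_pos x
  obtain ⟨k, hk⟩ := hdvd
  have hkpos : 0 < k := by
    rcases Nat.eq_zero_or_pos k with h | h
    · rw [h, mul_zero] at hk; omega
    · exact h
  set z := x ^ (r * k) with hzdef
  set w := x ^ k with hwdef
  have hwz : w ^ r = z := by rw [hwdef, hzdef, ← pow_mul, mul_comm]
  have hzr : z ^ r = 1 := by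
    rw [hzdef, ← pow_mul]
    have : r * k * r = n := by rw [hk]; ring
    rw [this, hn]
    exact pow_orderOf_eq_one x
  have hz1 : z ≠ 1 := by
    intro h
    have hd : n ∣ r * k := orderOf_dvd_of_pow_eq_one (by rw [← hzdef, h])
    have hlt : r * k < n := by
      rw [hk]
      nlinarith [hrp.one_lt, hkpos]
    exact absurd (Nat.le_of_dvd (Nat.mul_pos hrp.pos hkpos) hd) (by omega)
  apply hz1
  have hzf : z ∈ frattini G := by
    apply auxSF_mem_frattini
    intro M hM
    haveI : M.Normal :=
      Subgroup.NormalizerCondition.normal_of_coatom M (normalizerCondition_of_isNilpotent) hM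
    rw [← QuotientGroup.eq_one_iff]
    by_contra hne
    have hzrQ : ((z : G ⧸ M)) ^ r = 1 := by
      rw [← QuotientGroup.mk_pow, hzr]; rfl
    have hord : orderOf ((z : G ⧸ M)) = r := orderOf_eq_prime hzrQ hne
    have htop : Subgroup.zpowers ((z : G ⧸ M)) = ⊤ :=
      (auxSF_coatom_subgroups M hM _).resolve_left
        (by simpa [Subgroup.zpowers_eq_bot] using hne)
    have hcard : Nat.card (G ⧸ M) = r := by
      rw [← Subgroup.card_top, ← htop, Nat.card_zpowers, hord]
    have hwr : ((w : G ⧸ M)) ^ r = 1 := by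
      rw [← hcard]; exact pow_card_eq_one'
    apply hne
    rw [← hwz, QuotientGroup.mk_pow, hwr]
  rw [hΦ, Subgroup.mem_bot] at hzf
  exact hzf

end AuxSF


lemma auxSF_bezout_mem {G : Type*} [Group G] {t : G} {u v : ℕ} (h : Nat.Coprime u v)
    {K : Subgroup G} (hu : t ^ u ∈ K) (hv : t ^ v ∈ K) : t ∈ K := by
  obtain ⟨X, Y, hXY⟩ := Nat.isCoprime_iff_coprime.mpr h
  have h1 : (t ^ u) ^ X * (t ^ v) ^ Y = t := by
    rw [← zpow_natCast t u, ← zpow_natCast t v, ← zpow_mul, ← zpow_mul, ← zpow_add]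
    have : (u : ℤ) * X + (v : ℤ) * Y = 1 := by linarith [hXY]
    rw [this, zpow_one]
  rw [← h1]
  exact mul_mem (K.zpow_mem hu X) (K.zpow_mem hv Y)

lemma auxSF_main {G : Type*} [Group G] [Finite G] [Nontrivial G]
    (hcomm : ∀ a b : G, Commute a b)
    (hsf : ∀ x : G, Squarefree (orderOf x))
    {p q : ℕ} (hp : p.Prime) (hq : q.Prime) (hpq : p ≠ q)
    (hpd : p ∣ Nat.card G) (hqd : q ∣ Nat.card G)
    (m : ℕ)
    (hmax : ∀ S : Finset G, S.card = m + 1 → Subgroup.closure (S : Set G) = ⊤ →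
      ¬ (∀ a ∈ S, Subgroup.closure ((S : Set G) \ {a}) < ⊤)) :
    ∀ (N : ℕ) (T : Finset G), (∑ t ∈ T, orderOf t) ≤ N → T.card = m →
      Subgroup.closure (T : Set G) = ⊤ →
      (∀ a ∈ T, Subgroup.closure ((T : Set G) \ {a}) < ⊤) →
      ∃ S : Finset G, Subgroup.closure (S : Set G) = ⊤ ∧ S.card < m := by
  classical
  intro N
  induction N with
  | zero =>
    intro T hsum hcard hgen hind
    exfalso
    have hT : T = ∅ := by
      rw [Finset.eq_empty_iff_forall_notMem]
      intro t ht
      have h1 : 0 < orderOf t := orderOf_pos t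
      have h2 : orderOf t ≤ ∑ x ∈ T, orderOf x :=
        Finset.single_le_sum (fun x _ => Nat.zero_le _) ht
      omega
    rw [hT] at hgen
    simp only [Finset.coe_empty, Subgroup.closure_empty] at hgen
    exact bot_ne_top hgen
  | succ N ih =>
    intro T hsum hcard hgen hind
    by_cases hex : ∃ t ∈ T, ¬ (orderOf t).Prime
    · -- splitting case
      obtain ⟨t, htT, htnp⟩ := hex
      set n := orderOf t with hn
      have hnpos : 0 < n := orderOf_pos t
      have hn1 : n ≠ 1 := by
        intro h
        have ht1 : t = 1 := orderOf_eq_one_iff.mp h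
        have : Subgroup.closure ((T : Set G) \ {t}) = ⊤ := by
          rw [eq_top_iff, ← hgen]
          apply (Subgroup.closure_le _).mpr
          intro y hy
          rcases eq_or_ne y t with rfl | hyt
          · rw [ht1]; exact Subgroup.one_mem _
          · exact Subgroup.subset_closure (show y ∈ ((T : Set G) \ {t}) from ⟨hy, fun h => hyt (Set.mem_singleton_iff.mp h)⟩)
        exact absurd this (hind t htT).ne
      set r := n.minFac with hr
      have hrp : r.Prime := Nat.minFac_prime hn1
      obtain ⟨v, hv⟩ := n.minFac_dvd
      rw [← hr] at hv
      have hvpos : 0 < v := by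
        rcases Nat.eq_zero_or_pos v with h | h
        · rw [h, mul_zero] at hv; omega
        · exact h
      have hv1 : v ≠ 1 := by
        intro h; rw [h, mul_one] at hv; exact htnp (hv ▸ hrp)
      have hv2 : 2 ≤ v := by omega
      have hrltn : r < n := by nlinarith [hrp.one_lt]
      have hvltn : v < n := by nlinarith [hrp.one_lt]
      have hcop : Nat.Coprime r v := by
        rw [Nat.Prime.coprime_iff_not_dvd hrp]
        intro hrv
        obtain ⟨k, hk⟩ := hrv
        exact (Nat.squarefree_iff_prime_squarefree.mp (hsf t)) r hrp
          ⟨k, by rw [← hn, hv, hk]; ring⟩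
      set a := t ^ v with ha
      set b := t ^ r with hb
      have har : a ^ r = 1 := by rw [ha, ← pow_mul, mul_comm, ← hv, hn]; exact pow_orderOf_eq_one t
      have hbv : b ^ v = 1 := by rw [hb, ← pow_mul, ← hv, hn]; exact pow_orderOf_eq_one t
      have hoa : orderOf a ≤ r := Nat.le_of_dvd hrp.pos (orderOf_dvd_of_pow_eq_one har)
      have hob : orderOf b ≤ v := Nat.le_of_dvd hvpos (orderOf_dvd_of_pow_eq_one hbv)
      have hkey : ∀ K : Subgroup G, a ∈ K → b ∈ K → t ∈ K := by
        intro K haK hbK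
        exact auxSF_bezout_mem hcop hbK haK
      set E := T.erase t with hE
      have hEcard : E.card = m - 1 := by rw [hE, Finset.card_erase_of_mem htT, hcard]
      have hm1 : 1 ≤ m := by rw [← hcard]; exact Finset.card_pos.mpr ⟨t, htT⟩
      have hEcoe : (E : Set G) = (T : Set G) \ {t} := Finset.coe_erase t T
      have hEsum : (∑ x ∈ E, orderOf x) + n = ∑ x ∈ T, orderOf x := by
        rw [hE, hn]; exact Finset.sum_erase_add T _ htT
      -- common sub-lemma: independence of insert c E for c a power of t (c ∉ E)
      have hindpow : ∀ c : G, (∃ k : ℕ, c = t ^ k) → c ∉ E →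
          Subgroup.closure ((E : Set G)) < ⊤ →
          (∀ x ∈ insert c E, Subgroup.closure (((insert c E : Finset G) : Set G) \ {x}) < ⊤) := by
        intro c ⟨k, hck⟩ hcE hElt x hx
        rw [Finset.mem_insert] at hx
        rcases hx with rfl | hxE
        · have hset : ((insert x E : Finset G) : Set G) \ {x} = (E : Set G) := by
            rw [Finset.coe_insert]
            exact Set.insert_diff_self_of_notMem (by simpa using hcE)
          rw [hset]; exact hElt
        · have hxT : x ∈ T := Finset.mem_of_mem_erase hxE
          have hxt : x ≠ t := Finset.ne_of_mem_erase hxE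
          have hle : Subgroup.closure (((insert c E : Finset G) : Set G) \ {x}) ≤
              Subgroup.closure ((T : Set G) \ {x}) := by
            apply (Subgroup.closure_le _).mpr
            intro y hy
            obtain ⟨hy1, hy2⟩ := hy
            rw [Finset.coe_insert] at hy1
            rcases hy1 with rfl | hyE
            · rw [hck]
              exact Subgroup.pow_mem _ (Subgroup.subset_closure (show t ∈ ((T : Set G) \ {x}) from ⟨htT, fun h => hxt (Set.mem_singleton_iff.mp h).symm⟩)) k
            · have : y ∈ T := Finset.mem_of_mem_erase hyE
              exact Subgroup.subset_closure (show y ∈ ((T : Set G) \ {x}) from ⟨this, hy2⟩)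
          exact lt_of_le_of_lt hle (hind x hxT)
      -- generation transfer: if a,b in closure of a set containing handles...
      by_cases hA : Subgroup.closure ((insert a E : Finset G) : Set G) = ⊤
      · by_cases haE : a ∈ E
        · refine ⟨insert a E, hA, ?_⟩
          rw [Finset.insert_eq_self.mpr haE, hEcard]; omega
        · refine ih (insert a E) ?_ ?_ hA ?_
          · rw [Finset.sum_insert haE]
            have : orderOf a < n := lt_of_le_of_lt hoa hrltn
            omega
          · rw [Finset.card_insert_of_notMem haE, hEcard]; omega
          · exact hindpow a ⟨v, rfl⟩ haE (by rw [hEcoe]; exact hind t htT)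
      by_cases hB : Subgroup.closure ((insert b E : Finset G) : Set G) = ⊤
      · by_cases hbE : b ∈ E
        · refine ⟨insert b E, hB, ?_⟩
          rw [Finset.insert_eq_self.mpr hbE, hEcard]; omega
        · refine ih (insert b E) ?_ ?_ hB ?_
          · rw [Finset.sum_insert hbE]
            have : orderOf b < n := lt_of_le_of_lt hob hvltn
            omega
          · rw [Finset.card_insert_of_notMem hbE, hEcard]; omega
          · exact hindpow b ⟨r, rfl⟩ hbE (by rw [hEcoe]; exact hind t htT)
      -- contradiction case: construct an independent generating set of size m+1
      · exfalso
        set S2 := insert a (insert b E) with hS2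
        have hgen2 : Subgroup.closure ((S2 : Finset G) : Set G) = ⊤ := by
          rw [eq_top_iff, ← hgen]
          apply (Subgroup.closure_le _).mpr
          intro y hy
          have haS : a ∈ Subgroup.closure ((S2 : Finset G) : Set G) :=
            Subgroup.subset_closure (by simp [hS2])
          have hbS : b ∈ Subgroup.closure ((S2 : Finset G) : Set G) :=
            Subgroup.subset_closure (by simp [hS2])
          rcases eq_or_ne y t with rfl | hyt
          · exact hkey _ haS hbS
          · exact Subgroup.subset_closure (by simp [hS2, hE, Finset.mem_erase, hyt, hy])
        have hbE : b ∉ E := by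
          intro hbE
          apply hA
          rw [eq_top_iff, ← hgen2]
          apply (Subgroup.closure_le _).mpr
          intro y hy
          simp only [hS2, Finset.coe_insert, Set.mem_insert_iff] at hy
          rcases hy with rfl | hy
          · exact Subgroup.subset_closure (by simp)
          rcases hy with rfl | hy
          · exact Subgroup.subset_closure (by simp [hbE])
          · exact Subgroup.subset_closure (by simp [hy])
        have haBE : a ∉ insert b E := by
          intro haBE
          apply hB
          rw [eq_top_iff, ← hgen2]
          apply (Subgroup.closure_le _).mpr
          intro y hy
          simp only [hS2, Finset.coe_insert, Set.mem_insert_iff] at hy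
          rcases hy with rfl | hy
          · exact Subgroup.subset_closure (by simpa using haBE)
          rcases hy with rfl | hy
          · exact Subgroup.subset_closure (by simp)
          · exact Subgroup.subset_closure (by simp [hy])
        have hab : a ≠ b := by
          intro h
          simp only [Finset.mem_insert] at haBE
          exact haBE (Or.inl h)
        have hcard2 : S2.card = m + 1 := by
          rw [hS2, Finset.card_insert_of_notMem haBE, Finset.card_insert_of_notMem hbE,
            hEcard]
          omega
        apply hmax S2 hcard2 hgen2
        intro x hx
        simp only [hS2, Finset.mem_insert] at hx
        have hAlt : Subgroup.closure ((insert a E : Finset G) : Set G) < ⊤ :=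
          lt_top_iff_ne_top.mpr hA
        have hBlt : Subgroup.closure ((insert b E : Finset G) : Set G) < ⊤ :=
          lt_top_iff_ne_top.mpr hB
        rcases hx with hxa | hx
        · have hset : ((S2 : Finset G) : Set G) \ {x} = ((insert b E : Finset G) : Set G) := by
            rw [hxa, hS2]
            simp only [Finset.coe_insert]
            exact Set.insert_diff_self_of_notMem
              (fun hmem => haBE (by simpa using hmem))
          rw [hset]; exact hBlt
        rcases hx with hxb | hx
        · have hset : ((S2 : Finset G) : Set G) \ {x} = ((insert a E : Finset G) : Set G) := by
            rw [hxb, hS2]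
            simp only [Finset.coe_insert]
            ext y
            simp only [Set.mem_diff, Set.mem_insert_iff, Set.mem_singleton_iff]
            constructor
            · rintro ⟨h1, h2⟩
              rcases h1 with rfl | h1
              · exact Or.inl rfl
              rcases h1 with rfl | h1
              · exact absurd rfl h2
              · exact Or.inr h1
            · rintro (rfl | hy)
              · exact ⟨Or.inl rfl, hab⟩
              · refine ⟨Or.inr (Or.inr hy), ?_⟩
                intro h; rw [h] at hy; exact hbE hy
          rw [hset]; exact hAlt
        · have hxT : x ∈ T := Finset.mem_of_mem_erase hx
          have hxt : x ≠ t := Finset.ne_of_mem_erase hx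
          have hle : Subgroup.closure (((S2 : Finset G) : Set G) \ {x}) ≤
              Subgroup.closure ((T : Set G) \ {x}) := by
            apply (Subgroup.closure_le _).mpr
            intro y hy
            obtain ⟨hy1, hy2⟩ := hy
            simp only [hS2, Finset.coe_insert, Set.mem_insert_iff] at hy1
            rcases hy1 with rfl | hy1
            · exact Subgroup.pow_mem _ (Subgroup.subset_closure (show t ∈ ((T : Set G) \ {x}) from ⟨htT, fun h => hxt (Set.mem_singleton_iff.mp h).symm⟩)) v
            rcases hy1 with rfl | hy1
            · exact Subgroup.pow_mem _ (Subgroup.subset_closure (show t ∈ ((T : Set G) \ {x}) from ⟨htT, fun h => hxt (Set.mem_singleton_iff.mp h).symm⟩)) r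
            · exact Subgroup.subset_closure (show y ∈ ((T : Set G) \ {x}) from ⟨Finset.mem_of_mem_erase hy1, hy2⟩)
          exact lt_of_le_of_lt hle (hind x hxT)
    · -- all orders prime
      push_neg at hex
      by_cases hdist : ∃ s ∈ T, ∃ t ∈ T, orderOf s ≠ orderOf t
      · obtain ⟨s, hsT, t, htT, hst⟩ := hdist
        have hstne : s ≠ t := fun h => hst (by rw [h])
        set rs := orderOf s with hrs
        set rt := orderOf t with hrt
        have hcop : Nat.Coprime rs rt :=
          (Nat.coprime_primes (hex s hsT) (hex t htT)).mpr hst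
        set E2 := (T.erase s).erase t with hE2
        refine ⟨insert (s * t) E2, ?_, ?_⟩
        · rw [eq_top_iff, ← hgen]
          apply (Subgroup.closure_le _).mpr
          have hstmem : s * t ∈ Subgroup.closure ((insert (s * t) E2 : Finset G) : Set G) :=
            Subgroup.subset_closure (by simp)
          have htmem : t ∈ Subgroup.closure ((insert (s * t) E2 : Finset G) : Set G) := by
            apply auxSF_bezout_mem hcop (K := _)
            · have : t ^ rs = (s * t) ^ rs := by
                rw [(hcomm s t).mul_pow, hrs, pow_orderOf_eq_one, one_mul]
              rw [this]
              exact Subgroup.pow_mem _ hstmem rs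
            · rw [hrt, pow_orderOf_eq_one]
              exact Subgroup.one_mem _
          have hsmem : s ∈ Subgroup.closure ((insert (s * t) E2 : Finset G) : Set G) := by
            simpa using mul_mem hstmem (inv_mem htmem)
          intro y hy
          rcases eq_or_ne y s with rfl | hys
          · exact hsmem
          rcases eq_or_ne y t with rfl | hyt
          · exact htmem
          · exact Subgroup.subset_closure (by simp [hE2, Finset.mem_erase, hys, hyt, hy])
        · have h2m : 2 ≤ m := by
            rw [← hcard]
            exact Finset.one_lt_card.mpr ⟨s, hsT, t, htT, hstne⟩
          have hc2 : E2.card = m - 2 := by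
            rw [hE2, Finset.card_erase_of_mem (Finset.mem_erase.mpr ⟨hstne.symm, htT⟩),
              Finset.card_erase_of_mem hsT, hcard]
            omega
          calc (insert (s * t) E2).card ≤ E2.card + 1 := Finset.card_insert_le _ _
            _ = m - 2 + 1 := by rw [hc2]
            _ < m := by omega
      · push_neg at hdist
        exfalso
        obtain ⟨t₀, ht₀⟩ : T.Nonempty := by
          rw [Finset.nonempty_iff_ne_empty]
          intro h
          rw [h] at hgen
          simp only [Finset.coe_empty, Subgroup.closure_empty] at hgen
          exact bot_ne_top hgen
        set r := orderOf t₀ with hr0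
        have hrp : r.Prime := hex t₀ ht₀
        have hall : ∀ g : G, orderOf g ∣ r ^ Nat.card G := by
          intro g
          have hg : g ∈ Subgroup.closure (T : Set G) := by rw [hgen]; trivial
          refine Subgroup.closure_induction
            (p := fun g _ => orderOf g ∣ r ^ Nat.card G) ?_ ?_ ?_ ?_ hg
          · intro y hy
            have : orderOf y = r := hdist y hy t₀ ht₀
            rw [this]
            exact dvd_pow_self r Nat.card_pos.ne'
          · simp
          · intro x y _ _ hx hy
            exact ((hcomm x y).orderOf_mul_dvd_lcm).trans (Nat.lcm_dvd hx hy)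
          · intro x _ hx
            rwa [orderOf_inv]
        haveI : Fact p.Prime := ⟨hp⟩
        haveI : Fact q.Prime := ⟨hq⟩
        obtain ⟨gp, hgp⟩ := exists_prime_orderOf_dvd_card' p hpd
        obtain ⟨gq, hgq⟩ := exists_prime_orderOf_dvd_card' q hqd
        have hpr : p = r :=
          (Nat.prime_dvd_prime_iff_eq hp hrp).mp (hp.dvd_of_dvd_pow (hgp ▸ hall gp))
        have hqr : q = r :=
          (Nat.prime_dvd_prime_iff_eq hq hrp).mp (hq.dvd_of_dvd_pow (hgq ▸ hall gq))
        exact hpq (hpr.trans hqr.symm)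

/-- a finite nilpotent group with trivial Frattini subgroup whose order
is divisible by two distinct primes satisfies `d(G) < m(G)`. -/
theorem minGen_lt_maxIndep (G : Type*) [Group G] [Finite G] [Group.IsNilpotent G]
    (hΦ : frattini G = ⊥) (p q : ℕ) (hp : p.Prime) (hq : q.Prime) (hpq : p ≠ q)
    (hpd : p ∣ Nat.card G) (hqd : q ∣ Nat.card G) :
    minGen G < maxIndep G := by
  classical
  haveI : Nontrivial G := by
    have h0 : 0 < Nat.card G := Nat.card_pos
    have h1 : p ≤ Nat.card G := Nat.le_of_dvd h0 hpd
    have h2 : 1 < p := hp.one_lt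
    exact Finite.one_lt_card_iff_nontrivial.mp (by omega)
  have hcomm : ∀ a b : G, Commute a b := auxSF_comm hΦ
  have hsf : ∀ x : G, Squarefree (orderOf x) := auxSF_squarefree hΦ
  haveI := Fintype.ofFinite G
  set dSet : Set ℕ :=
    {n | ∃ S : Finset G, S.card = n ∧ Subgroup.closure (S : Set G) = ⊤} with hdSet
  set indSet : Set ℕ :=
    {n | ∃ S : Finset G, S.card = n ∧ Subgroup.closure (S : Set G) = ⊤ ∧
      ∀ a ∈ S, Subgroup.closure ((S : Set G) \ {a}) < ⊤} with hindSet
  have hminGen : minGen G = sInf dSet := rfl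
  have hmaxIndep : maxIndep G = sSup indSet := rfl
  have hbdd : BddAbove indSet := by
    refine ⟨Nat.card G, ?_⟩
    rintro n ⟨S, rfl, -, -⟩
    calc S.card ≤ Fintype.card G := Finset.card_le_univ S
      _ = Nat.card G := Nat.card_eq_fintype_card.symm
  have hgenne : dSet.Nonempty :=
    ⟨(Finset.univ : Finset G).card, Finset.univ, rfl, by simp⟩
  obtain ⟨S₀, hS₀card, hS₀gen⟩ := Nat.sInf_mem hgenne
  have hS₀ind : ∀ a ∈ S₀, Subgroup.closure ((S₀ : Set G) \ {a}) < ⊤ := by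
    intro a ha
    rw [lt_top_iff_ne_top]
    intro htop
    have h1 : ((S₀.erase a : Finset G) : Set G) = (S₀ : Set G) \ {a} := Finset.coe_erase a S₀
    have h2 : (S₀.erase a).card = S₀.card - 1 := Finset.card_erase_of_mem ha
    have hpos : 0 < S₀.card := Finset.card_pos.mpr ⟨a, ha⟩
    have hmem : S₀.card - 1 ∈ dSet := ⟨S₀.erase a, h2, by rw [h1]; exact htop⟩
    have hle := Nat.sInf_le hmem
    omega
  have hdmem : sInf dSet ∈ indSet := ⟨S₀, hS₀card, hS₀gen, hS₀ind⟩
  have hne : indSet.Nonempty := ⟨_, hdmem⟩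
  obtain ⟨T, hTcard, hTgen, hTind⟩ := Nat.sSup_mem hne hbdd
  set m := sSup indSet with hm
  have hmax : ∀ S : Finset G, S.card = m + 1 → Subgroup.closure (S : Set G) = ⊤ →
      ¬ (∀ a ∈ S, Subgroup.closure ((S : Set G) \ {a}) < ⊤) := by
    intro S hc hg hi
    have hmem : m + 1 ∈ indSet := ⟨S, hc, hg, hi⟩
    have := le_csSup hbdd hmem
    omega
  obtain ⟨S, hSgen, hScard⟩ :=
    auxSF_main hcomm hsf hp hq hpq hpd hqd m hmax (∑ t ∈ T, orderOf t) T le_rfl hTcard hTgen hTind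
  have hle : sInf dSet ≤ S.card := Nat.sInf_le ⟨S, rfl, hSgen⟩
  rw [hminGen, hmaxIndep]
  omega
end
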